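/- arXiv:1201.0190 — 5 statements merged into one kernel-verified Lean document; each statement's English description precedes it below -/
import Mathlib

section
/- Let $L \subseteq W$ be a null line with $\rho L \cap L^\perp = \{0\}$, let $\alpha \in \mathbb{C} \setminus \{0\}$, and let $V := \ker(\rho - \mathrm{id})$ be the fixed subspace of $\rho$. Then $\dim_{\mathbb{C}}\big(V \cap (L \oplus \rho L)\big) = 1$, the subspace $V$ decomposes as $V = \big(V \cap (L \oplus \rho L)\big) \oplus \big(V \cap (L \oplus \rho L)^\perp\big)$, and consequently $p_{\alpha,L}(\infty)$ preserves $V$ with $\det\big(p_{\alpha,L}(\infty)|_V\big) = -1$, while $\det\big(p_{\alpha,L}(0)|_V\big) = 1$. -/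
open Module

lemma my_det_prodMap {K : Type*} [Field K] {M N : Type*} [AddCommGroup M] [Module K M]
    [AddCommGroup N] [Module K N] [FiniteDimensional K M] [FiniteDimensional K N]
    (f : Module.End K M) (g : Module.End K N) :
    LinearMap.det (f.prodMap g) = LinearMap.det f * LinearMap.det g := by
  classical
  let b₁ := Module.finBasis K M
  let b₂ := Module.finBasis K N
  rw [← LinearMap.det_toMatrix (b₁.prod b₂), LinearMap.toMatrix_prodMap,
    Matrix.det_fromBlocks_zero₂₁, LinearMap.det_toMatrix, LinearMap.det_toMatrix]

/-- `ActsAs B ρ L a b T` says that the endomorphism `T` acts as multiplication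
by `a` on `L`, as the identity on `(L ⊕ ρL)^⊥`, and as multiplication by `b` on `ρL`.
This is the defining property of the maps `p_{α,L}(λ)` and `q_{α,L}(λ)`. -/
def ActsAs {W : Type*} [AddCommGroup W] [Module ℂ W]
    (B : LinearMap.BilinForm ℂ W) (ρ : Module.End ℂ W) (L : Submodule ℂ W)
    (a b : ℂ) (T : Module.End ℂ W) : Prop :=
  (∀ x ∈ L, T x = a • x) ∧
  (∀ x ∈ B.orthogonal (L ⊔ Submodule.map ρ L), T x = x) ∧
  (∀ x ∈ Submodule.map ρ L, T x = b • x)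

/-- For `V = ker(ρ - 1)` the fixed space of `ρ`: `dim (V ∩ (L ⊕ ρL)) = 1`,
`V = (V ∩ (L ⊕ ρL)) ⊕ (V ∩ (L ⊕ ρL)^⊥)`, `p_{α,L}(∞)` (acting as `-1` on `L, ρL` and `1`
on `(L ⊕ ρL)^⊥`) preserves `V` with determinant `-1` on `V`, while `p_{α,L}(0)` has
determinant `1` on `V`. -/
theorem stmt7 {W : Type*} [AddCommGroup W] [Module ℂ W] [FiniteDimensional ℂ W]
    (B : LinearMap.BilinForm ℂ W) (hB : ∀ x y, B x y = B y x) (hBnd : B.Nondegenerate)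
    (ρ : Module.End ℂ W) (hρ2 : ρ * ρ = 1) (hρB : ∀ x y, B (ρ x) (ρ y) = B x y)
    (L : Submodule ℂ W) (hL1 : Module.finrank ℂ L = 1) (hLnull : ∀ l ∈ L, B l l = 0)
    (hLρ : Submodule.map ρ L ⊓ B.orthogonal L = ⊥)
    (α : ℂ) (hα : α ≠ 0)
    (pinf p0 : Module.End ℂ W)
    (hpinf : ActsAs B ρ L (-1) (-1) pinf)
    (hp0 : ActsAs B ρ L 1 1 p0) :
    Module.finrank ℂ ↥(LinearMap.ker (ρ - 1) ⊓ (L ⊔ Submodule.map ρ L)) = 1 ∧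
    (LinearMap.ker (ρ - 1)
        = LinearMap.ker (ρ - 1) ⊓ (L ⊔ Submodule.map ρ L)
            ⊔ LinearMap.ker (ρ - 1) ⊓ B.orthogonal (L ⊔ Submodule.map ρ L) ∧
      (LinearMap.ker (ρ - 1) ⊓ (L ⊔ Submodule.map ρ L))
          ⊓ (LinearMap.ker (ρ - 1) ⊓ B.orthogonal (L ⊔ Submodule.map ρ L)) = ⊥) ∧
    (∃ h : ∀ x ∈ LinearMap.ker (ρ - 1), pinf x ∈ LinearMap.ker (ρ - 1),
        LinearMap.det (pinf.restrict h) = -1) ∧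
    (∃ h : ∀ x ∈ LinearMap.ker (ρ - 1), p0 x ∈ LinearMap.ker (ρ - 1),
        LinearMap.det (p0.restrict h) = 1) := by
  classical
  have hρρ : ∀ x, ρ (ρ x) = x := fun x => by
    have := LinearMap.ext_iff.1 hρ2 x
    simpa [Module.End.mul_apply] using this
  obtain ⟨⟨l, hlL⟩, hl0, hlspan⟩ := finrank_eq_one_iff'.mp hL1
  have hl0' : l ≠ 0 := fun h => hl0 (Subtype.ext h)
  have hLspan : L = Submodule.span ℂ {l} := by
    apply le_antisymm
    · intro x hx
      obtain ⟨c, hc⟩ := hlspan ⟨x, hx⟩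
      exact Submodule.mem_span_singleton.2 ⟨c, congrArg Subtype.val hc⟩
    · rw [Submodule.span_le, Set.singleton_subset_iff]; exact hlL
  have hmapspan : Submodule.map ρ L = Submodule.span ℂ {ρ l} := by
    rw [hLspan, Submodule.map_span, Set.image_singleton]
  set c : ℂ := B (ρ l) l with hcdef
  have hll : B l l = 0 := hLnull l hlL
  have hρlρl : B (ρ l) (ρ l) = 0 := by rw [hρB]; exact hll
  have hc : c ≠ 0 := by
    intro h
    have h1 : ρ l ∈ B.orthogonal L := by
      rw [LinearMap.BilinForm.mem_orthogonal_iff]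
      intro n hn
      rw [hLspan, Submodule.mem_span_singleton] at hn
      obtain ⟨a, rfl⟩ := hn
      rw [map_smul, LinearMap.smul_apply, smul_eq_mul, hB l (ρ l), ← hcdef, h, mul_zero]
    have h2 : ρ l ∈ Submodule.map ρ L := ⟨l, hlL, rfl⟩
    have h3 : ρ l = 0 := by
      have : ρ l ∈ Submodule.map ρ L ⊓ B.orthogonal L := ⟨h2, h1⟩
      rwa [hLρ, Submodule.mem_bot] at this
    exact hl0' (by rw [← hρρ l, h3, map_zero])
  have hind : ∀ a b : ℂ, a • l + b • ρ l = 0 → a = 0 ∧ b = 0 := by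
    intro a b hab
    have h1 := congrArg (B (ρ l)) hab
    simp only [map_add, map_smul, smul_eq_mul, hρlρl, mul_zero, add_zero, ← hcdef, map_zero] at h1
    have ha : a = 0 := by
      rcases mul_eq_zero.1 h1 with h | h
      exacts [h, absurd h hc]
    have h2 := congrArg (B l) hab
    simp only [map_add, map_smul, smul_eq_mul, hll, mul_zero, zero_add, hB l (ρ l), ← hcdef,
      map_zero] at h2
    have hb : b = 0 := by
      rcases mul_eq_zero.1 h2 with h | h
      exacts [h, absurd h hc]
    exact ⟨ha, hb⟩
  set U : Submodule ℂ W := L ⊔ Submodule.map ρ L with hUdef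
  have hlU : l ∈ U := Submodule.mem_sup_left hlL
  have hρlL : ρ l ∈ Submodule.map ρ L := ⟨l, hlL, rfl⟩
  have hρlU : ρ l ∈ U := Submodule.mem_sup_right hρlL
  have hUmem : ∀ x, x ∈ U ↔ ∃ a b : ℂ, x = a • l + b • ρ l := by
    intro x
    constructor
    · intro hx
      rw [hUdef] at hx
      obtain ⟨y, hy, z, hz, rfl⟩ := Submodule.mem_sup.1 hx
      rw [hLspan, Submodule.mem_span_singleton] at hy
      rw [hmapspan, Submodule.mem_span_singleton] at hz
      obtain ⟨a, rfl⟩ := hy; obtain ⟨b, rfl⟩ := hz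
      exact ⟨a, b, rfl⟩
    · rintro ⟨a, b, rfl⟩
      exact Submodule.add_mem _ (Submodule.smul_mem _ _ hlU) (Submodule.smul_mem _ _ hρlU)
  set O : Submodule ℂ W := B.orthogonal U with hOdef
  have hOmem : ∀ x, x ∈ O ↔ ∀ n ∈ U, B n x = 0 := by
    intro x
    rw [hOdef, LinearMap.BilinForm.mem_orthogonal_iff]
  have hρU : ∀ x ∈ U, ρ x ∈ U := by
    intro x hx
    obtain ⟨a, b, rfl⟩ := (hUmem x).1 hx
    rw [map_add, map_smul, map_smul, hρρ]
    exact Submodule.add_mem _ (Submodule.smul_mem _ _ hρlU) (Submodule.smul_mem _ _ hlU)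
  have hρO : ∀ x ∈ O, ρ x ∈ O := by
    intro x hx
    rw [hOmem] at hx ⊢
    intro n hn
    rw [← hρρ n, hρB (ρ n) x]
    exact hx (ρ n) (hρU n hn)
  have hBrefl : B.IsRefl := fun x y h => by rw [hB]; exact h
  have hrest : (B.restrict U).Nondegenerate := by
    suffices hsl : LinearMap.SeparatingLeft (B.restrict U) from
      ⟨hsl, fun y hy => hsl y (fun x => by
        have := hy x
        change B (x : W) (y : W) = 0 at this
        change B (y : W) (x : W) = 0
        rw [hB]; exact this)⟩
    rintro ⟨x, hx⟩ hxall
    obtain ⟨a, b, rfl⟩ := (hUmem x).1 hx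
    have h1 := hxall ⟨l, hlU⟩
    have h2 := hxall ⟨ρ l, hρlU⟩
    simp only [LinearMap.BilinForm.restrict_apply, LinearMap.domRestrict_apply, map_add, map_smul, LinearMap.smul_apply,
      LinearMap.add_apply, smul_eq_mul, hll, hρlρl, ← hcdef, mul_zero, zero_add, add_zero,
      hB l (ρ l)] at h1 h2
    have ha : a = 0 := by
      rcases mul_eq_zero.1 h2 with h | h
      exacts [h, absurd h hc]
    have hb : b = 0 := by
      rcases mul_eq_zero.1 h1 with h | h
      exacts [h, absurd h hc]
    ext
    simp [ha, hb]
  have hcompl : IsCompl U O :=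
    LinearMap.BilinForm.isCompl_orthogonal_of_restrict_nondegenerate hBrefl hrest
  have hUObot : U ⊓ O = ⊥ := hcompl.inf_eq_bot
  have hUOtop : U ⊔ O = ⊤ := hcompl.sup_eq_top
  set V : Submodule ℂ W := LinearMap.ker (ρ - 1) with hVdef
  have hVmem : ∀ x, x ∈ V ↔ ρ x = x := by
    intro x
    rw [hVdef, LinearMap.mem_ker, LinearMap.sub_apply, Module.End.one_apply, sub_eq_zero]
  set v0 : W := l + ρ l with hv0def
  have hv0V : v0 ∈ V := by
    rw [hVmem, hv0def, map_add, hρρ, add_comm]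
  have hv0U : v0 ∈ U := Submodule.add_mem _ hlU hρlU
  have hv00 : v0 ≠ 0 := by
    intro h
    have := hind 1 1 (by simpa using h)
    exact one_ne_zero this.1
  have hVU : V ⊓ U = Submodule.span ℂ {v0} := by
    apply le_antisymm
    · intro x hx
      rw [Submodule.mem_inf] at hx
      obtain ⟨hxV, hxU⟩ := hx
      obtain ⟨a, b, rfl⟩ := (hUmem x).1 hxU
      rw [hVmem, map_add, map_smul, map_smul, hρρ] at hxV
      have hab : (b - a) • l + (a - b) • ρ l = 0 := by
        have h0 : a • ρ l + b • l - (a • l + b • ρ l) = 0 := sub_eq_zero.2 hxV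
        linear_combination (norm := module) h0
      have hba : b = a := sub_eq_zero.1 (hind _ _ hab).1
      refine Submodule.mem_span_singleton.2 ⟨a, ?_⟩
      rw [hv0def, smul_add, hba]
    · rw [Submodule.span_le, Set.singleton_subset_iff]
      exact ⟨hv0V, hv0U⟩
  have hdecomp : ∀ v ∈ V, ∃ u w, u ∈ V ⊓ U ∧ w ∈ V ⊓ O ∧ v = u + w := by
    intro v hv
    have hvm : v ∈ U ⊔ O := by rw [hUOtop]; trivial
    obtain ⟨u, hu, w, hw, rfl⟩ := Submodule.mem_sup.1 hvm
    have hρv := (hVmem _).1 hv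
    rw [map_add] at hρv
    have hdiff : ρ u - u ∈ U ⊓ O := by
      refine Submodule.mem_inf.2 ⟨Submodule.sub_mem _ (hρU u hu) hu, ?_⟩
      have heq : ρ u - u = w - ρ w := by linear_combination (norm := module) hρv
      rw [heq]
      exact Submodule.sub_mem _ hw (hρO w hw)
    rw [hUObot, Submodule.mem_bot, sub_eq_zero] at hdiff
    have hρw : ρ w = w := by
      rw [hdiff] at hρv
      exact add_left_cancel hρv
    exact ⟨u, w, Submodule.mem_inf.2 ⟨(hVmem u).2 hdiff, hu⟩,
      Submodule.mem_inf.2 ⟨(hVmem w).2 hρw, hw⟩, rfl⟩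
  have goal1 : finrank ℂ ↥(V ⊓ U) = 1 := by
    rw [hVU]; exact finrank_span_singleton hv00
  have goal2a : V = V ⊓ U ⊔ V ⊓ O := by
    apply le_antisymm
    · intro v hv
      obtain ⟨u, w, hu, hw, rfl⟩ := hdecomp v hv
      exact Submodule.add_mem_sup hu hw
    · exact sup_le inf_le_left inf_le_left
  have goal2b : (V ⊓ U) ⊓ (V ⊓ O) = ⊥ := by
    rw [eq_bot_iff]
    intro x hx
    rw [Submodule.mem_inf, Submodule.mem_inf, Submodule.mem_inf] at hx
    have : x ∈ U ⊓ O := Submodule.mem_inf.2 ⟨hx.1.2, hx.2.2⟩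
    rwa [hUObot] at this
  obtain ⟨hpL, hpOr, hpρL⟩ := hpinf
  obtain ⟨hqL, hqOr, hqρL⟩ := hp0
  have hpU : ∀ x ∈ U, pinf x = -x := by
    intro x hx
    obtain ⟨a, b, rfl⟩ := (hUmem x).1 hx
    rw [map_add, hpL _ (Submodule.smul_mem _ a hlL), hpρL _ (Submodule.smul_mem _ b hρlL)]
    module
  have hpO : ∀ x ∈ O, pinf x = x := fun x hx => hpOr x hx
  have hmeminf : ∀ x ∈ V, pinf x ∈ V := by
    intro x hx
    obtain ⟨u, w, hu, hw, rfl⟩ := hdecomp x hx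
    rw [map_add, hpU u (Submodule.mem_inf.1 hu).2, hpO w (Submodule.mem_inf.1 hw).2]
    rw [hVmem, map_add, map_neg, (hVmem u).1 (Submodule.mem_inf.1 hu).1,
      (hVmem w).1 (Submodule.mem_inf.1 hw).1]
  -- p0 is the identity
  have hqU : ∀ x ∈ U, p0 x = x := by
    intro x hx
    obtain ⟨a, b, rfl⟩ := (hUmem x).1 hx
    rw [map_add, hqL _ (Submodule.smul_mem _ a hlL), hqρL _ (Submodule.smul_mem _ b hρlL)]
    module
  have hp0id : ∀ x, p0 x = x := by
    intro x
    have hvm : x ∈ U ⊔ O := by rw [hUOtop]; trivial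
    obtain ⟨u, hu, w, hw, rfl⟩ := Submodule.mem_sup.1 hvm
    rw [map_add, hqU u hu, hqOr w hw]
  have hmem0 : ∀ x ∈ V, p0 x ∈ V := fun x hx => by rw [hp0id]; exact hx
  have hdet0 : LinearMap.det (p0.restrict hmem0) = 1 := by
    have hid : p0.restrict hmem0 = LinearMap.id := by
      apply LinearMap.ext; intro x
      apply Subtype.ext
      rw [LinearMap.restrict_coe_apply, hp0id, LinearMap.id_apply]
    rw [hid, LinearMap.det_id]
  -- determinant of pinf on V
  set T' : Submodule ℂ V := (V ⊓ U).comap V.subtype with hT'def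
  set S' : Submodule ℂ V := (V ⊓ O).comap V.subtype with hS'def
  have hcompl' : IsCompl T' S' := by
    constructor
    · rw [disjoint_iff, eq_bot_iff]
      intro x hx
      rw [Submodule.mem_inf, hT'def, hS'def, Submodule.mem_comap, Submodule.mem_comap] at hx
      have hx0 : (x : W) ∈ (V ⊓ U) ⊓ (V ⊓ O) := Submodule.mem_inf.2 ⟨hx.1, hx.2⟩
      rw [goal2b, Submodule.mem_bot] at hx0
      exact (Submodule.mem_bot ℂ).2 (Subtype.ext hx0)
    · rw [codisjoint_iff, eq_top_iff]
      intro x _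
      obtain ⟨u, w, hu, hw, huw⟩ := hdecomp (x : W) x.2
      refine Submodule.mem_sup.2
        ⟨⟨u, (Submodule.mem_inf.1 hu).1⟩, Submodule.mem_comap.2 ?_,
         ⟨w, (Submodule.mem_inf.1 hw).1⟩, Submodule.mem_comap.2 ?_, ?_⟩
      · exact hu
      · exact hw
      · exact Subtype.ext huw.symm
  have hT1 : finrank ℂ T' = 1 := by
    rw [hT'def, LinearEquiv.finrank_eq (Submodule.comapSubtypeEquivOfLe inf_le_left), goal1]
  set e := Submodule.prodEquivOfIsCompl T' S' hcompl' with hedef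
  set g := pinf.restrict hmeminf with hgdef
  have hge : ∀ x : T' × S',
      g (e x) = e ((-LinearMap.id : T' →ₗ[ℂ] T').prodMap (LinearMap.id : S' →ₗ[ℂ] S') x) := by
    rintro ⟨⟨⟨x, hxV⟩, hxT⟩, ⟨⟨y, hyV⟩, hyS⟩⟩
    apply Subtype.ext
    rw [hT'def, Submodule.mem_comap] at hxT
    rw [hS'def, Submodule.mem_comap] at hyS
    have hx : pinf x = -x := hpU x (Submodule.mem_inf.1 hxT).2
    have hy : pinf y = y := hpO y (Submodule.mem_inf.1 hyS).2
    simp only [hedef, hgdef, Submodule.coe_prodEquivOfIsCompl', LinearMap.prodMap_apply,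
      LinearMap.neg_apply, LinearMap.id_apply, LinearMap.restrict_coe_apply,
      Submodule.coe_add, map_add]
    simp only [Submodule.coe_neg]
    rw [hx, hy]
  have hconj : ((e.symm : V →ₗ[ℂ] T' × S') ∘ₗ g ∘ₗ (e : T' × S' →ₗ[ℂ] V))
      = (-LinearMap.id : T' →ₗ[ℂ] T').prodMap (LinearMap.id : S' →ₗ[ℂ] S') := by
    apply LinearMap.ext
    intro x
    simp only [LinearMap.comp_apply, LinearEquiv.coe_coe]
    rw [hge x, LinearEquiv.symm_apply_apply]
  have hdetinf : LinearMap.det g = -1 := by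
    have h1 := LinearMap.det_conj g e.symm
    rw [LinearEquiv.symm_symm] at h1
    rw [← h1, hconj, my_det_prodMap, LinearMap.det_id, mul_one]
    have hneg : (-LinearMap.id : T' →ₗ[ℂ] T') = (-1 : ℂ) • LinearMap.id := by
      ext x; simp
    rw [hneg, LinearMap.det_smul, hT1, LinearMap.det_id]
    norm_num
  exact ⟨goal1, ⟨goal2a, goal2b⟩, ⟨hmeminf, hdetinf⟩, ⟨hmem0, hdet0⟩⟩
end

section
/- Let $L \subseteq W$ be a null line with $\rho L \cap L^\perp = \{0\}$, let $\alpha \in \mathbb{C} \setminus \{0\}$ and $\lambda \in \mathbb{C} \setminus \{\alpha, -\alpha\}$. Let $l \in L$, $w \in (L \oplus \rho L)^\perp$, and let $\xi$ be the endomorphism of $W$ given by $\xi(x) = (l, x)w - (w, x)l$. Then $p_{\alpha,L}(\lambda) \circ \xi \circ p_{\alpha,L}(\lambda)^{-1} = \frac{\alpha - \lambda}{\alpha + \lambda}\, \xi$. -/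
open Module

/-- For `l ∈ L`, `w ∈ (L ⊕ ρL)^⊥` and `ξ(x) = (l,x)w - (w,x)l`, conjugating `ξ` by
`p_{α,L}(λ)` multiplies it by `(α - λ)/(α + λ)`. -/
theorem stmt8 {W : Type*} [AddCommGroup W] [Module ℂ W] [FiniteDimensional ℂ W]
    (B : LinearMap.BilinForm ℂ W) (hB : ∀ x y, B x y = B y x) (hBnd : B.Nondegenerate)
    (ρ : Module.End ℂ W) (hρ2 : ρ * ρ = 1) (hρB : ∀ x y, B (ρ x) (ρ y) = B x y)
    (L : Submodule ℂ W) (hL1 : Module.finrank ℂ L = 1) (hLnull : ∀ l ∈ L, B l l = 0)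
    (hLρ : Submodule.map ρ L ⊓ B.orthogonal L = ⊥)
    (α lam : ℂ) (hα : α ≠ 0) (hlam1 : lam ≠ α) (hlam2 : lam ≠ -α)
    (l w : W) (hl : l ∈ L) (hw : w ∈ B.orthogonal (L ⊔ Submodule.map ρ L))
    (p p' : Module.End ℂ W)
    (hp : ActsAs B ρ L ((α - lam) / (α + lam)) ((α + lam) / (α - lam)) p)
    (hpinv : p * p' = 1 ∧ p' * p = 1)
    (ξ : Module.End ℂ W) (hξ : ∀ x, ξ x = B l x • w - B w x • l) :
    p * ξ * p' = ((α - lam) / (α + lam)) • ξ := by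
  have hrefl : B.IsRefl := fun x y h => by rw [hB]; exact h
  have hd1 : α - lam ≠ 0 := sub_ne_zero.mpr (Ne.symm hlam1)
  have hd2 : α + lam ≠ 0 := by
    intro h; apply hlam2; linear_combination h
  set c : ℂ := (α - lam) / (α + lam) with hc
  set b : ℂ := (α + lam) / (α - lam) with hb
  have hcne : c ≠ 0 := div_ne_zero hd1 hd2
  have hbne : b ≠ 0 := div_ne_zero hd2 hd1
  have hbc : b = c⁻¹ := by
    rw [hb, hc, inv_div]
  set M : Submodule ℂ W := L ⊔ Submodule.map ρ L with hM
  -- a generator of L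
  obtain ⟨e₀, he₀ne, he₀span⟩ := (finrank_eq_one_iff' (K := ℂ) (V := L)).mp hL1
  set e : W := (e₀ : W) with he
  have heL : e ∈ L := e₀.2
  have hene : e ≠ 0 := fun h => he₀ne (Subtype.ext h)
  have hgen : ∀ x ∈ L, ∃ s : ℂ, x = s • e := by
    intro x hx
    obtain ⟨s, hs⟩ := he₀span ⟨x, hx⟩
    exact ⟨s, by simpa using (congrArg Subtype.val hs).symm⟩
  -- B e (ρ e) ≠ 0
  have hβ : B e (ρ e) ≠ 0 := by
    intro h
    have hρeL : ρ e ∈ Submodule.map ρ L := ⟨e, heL, rfl⟩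
    have hρeO : ρ e ∈ B.orthogonal L := by
      intro n hn
      obtain ⟨s, rfl⟩ := hgen n hn
      simp [LinearMap.BilinForm.IsOrtho, h]
    have : ρ e ∈ (⊥ : Submodule ℂ W) := hLρ ▸ Submodule.mem_inf.mpr ⟨hρeL, hρeO⟩
    have hρe0 : ρ e = 0 := by simpa using this
    apply hene
    have : ρ (ρ e) = e := by
      have := congrArg (fun f => f e) hρ2
      simpa [Module.End.mul_apply] using this
    rw [← this, hρe0, map_zero]
  -- B vanishes on pairs within L and within ρL
  have hLL : ∀ x ∈ L, ∀ y ∈ L, B x y = 0 := by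
    intro x hx y hy
    obtain ⟨s, rfl⟩ := hgen x hx
    obtain ⟨t, rfl⟩ := hgen y hy
    have := hLnull e heL
    simp [this]
  -- restriction of B to M is nondegenerate
  have hres : (B.restrict M).Nondegenerate := by
    refine (LinearMap.IsRefl.nondegenerate_iff_separatingLeft (B := B.restrict M) (fun x y h => by
      simpa [LinearMap.BilinForm.restrict_apply, hB] using h)).mpr ?_
    rintro ⟨m, hmM⟩ hm
    obtain ⟨a1, ha1, a2, ha2, hsum⟩ := Submodule.mem_sup.mp hmM
    obtain ⟨s, rfl⟩ := hgen a1 ha1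
    obtain ⟨a2', ha2', rfl⟩ := ha2
    obtain ⟨t, rfl⟩ := hgen a2' ha2'
    have hee : B e e = 0 := hLnull e heL
    have hρeρe : B (ρ e) (ρ e) = 0 := by rw [hρB]; exact hee
    have hρee : B (ρ e) e = B e (ρ e) := hB _ _
    have heM : e ∈ M := Submodule.mem_sup_left heL
    have hρeM : ρ e ∈ M := Submodule.mem_sup_right ⟨e, heL, rfl⟩
    have h1 : B m e = 0 := hm ⟨e, heM⟩
    have h2 : B m (ρ e) = 0 := hm ⟨ρ e, hρeM⟩
    rw [← hsum] at h1 h2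
    simp only [map_add, map_smul, LinearMap.add_apply, LinearMap.smul_apply,
      smul_eq_mul, hee, hρeρe, hρee] at h1 h2
    have ht0 : t = 0 := by
      have : t * B e (ρ e) = 0 := by linear_combination h1
      rcases mul_eq_zero.mp this with h | h
      · exact h
      · exact absurd h hβ
    have hs0 : s = 0 := by
      have : s * B e (ρ e) = 0 := by linear_combination h2
      rcases mul_eq_zero.mp this with h | h
      · exact h
      · exact absurd h hβ
    refine Subtype.ext ?_
    simp [← hsum, hs0, ht0]
  have hcompl : IsCompl M (B.orthogonal M) :=
    LinearMap.BilinForm.isCompl_orthogonal_of_restrict_nondegenerate hrefl hres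
  -- p' acts as inverses
  have hp'L : ∀ x ∈ L, p' x = c⁻¹ • x := by
    intro x hx
    have h1 : p x = c • x := hp.1 x hx
    have h2 : p' (p x) = x := by
      have := congrArg (fun f => f x) hpinv.2
      simpa [Module.End.mul_apply] using this
    rw [h1, map_smul] at h2
    have h3 : c⁻¹ • (c • p' x) = c⁻¹ • x := congrArg _ h2
    rwa [smul_smul, inv_mul_cancel₀ hcne, one_smul] at h3
  have hp'O : ∀ x ∈ B.orthogonal M, p' x = x := by
    intro x hx
    have h1 : p x = x := hp.2.1 x hx
    have h2 : p' (p x) = x := by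
      have := congrArg (fun f => f x) hpinv.2
      simpa [Module.End.mul_apply] using this
    rwa [h1] at h2
  have hp'R : ∀ x ∈ Submodule.map ρ L, p' x = c • x := by
    intro x hx
    have h1 : p x = b • x := hp.2.2 x hx
    have h2 : p' (p x) = x := by
      have := congrArg (fun f => f x) hpinv.2
      simpa [Module.End.mul_apply] using this
    rw [h1, map_smul, hbc] at h2
    have h3 : c • (c⁻¹ • p' x) = c • x := congrArg _ h2
    rwa [smul_smul, mul_inv_cancel₀ hcne, one_smul] at h3
  -- main computation
  ext x
  simp only [Module.End.mul_apply, LinearMap.smul_apply]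
  -- decompose x
  have hxtop : x ∈ M ⊔ B.orthogonal M := by rw [hcompl.sup_eq_top]; trivial
  obtain ⟨m, hmM, y, hy, rfl⟩ := Submodule.mem_sup.mp hxtop
  obtain ⟨x₁, hx₁, x₃, hx₃, rfl⟩ := Submodule.mem_sup.mp hmM
  -- evaluate p'
  have hp'x : p' (x₁ + x₃ + y) = c⁻¹ • x₁ + c • x₃ + y := by
    rw [map_add, map_add, hp'L x₁ hx₁, hp'R x₃ hx₃, hp'O y hy]
  rw [hp'x, hξ, hξ]
  -- B l evaluations
  have hBl1 : B l x₁ = 0 := hLL l hl x₁ hx₁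
  have hBly : B l y = 0 := hy l (Submodule.mem_sup_left hl)
  have hBw1 : B w x₁ = 0 := by rw [hB]; exact hw x₁ (Submodule.mem_sup_left hx₁)
  have hBw3 : B w x₃ = 0 := by rw [hB]; exact hw x₃ (Submodule.mem_sup_right hx₃)
  have hpw : p w = w := hp.2.1 w hw
  have hpl : p l = c • l := hp.1 l hl
  simp only [map_add, map_smul, map_sub, smul_eq_mul, hBl1, hBly, hBw1, hBw3, hpw, hpl]
  simp only [smul_sub, smul_smul, smul_add]
  ring_nf
end

section
/- Let $L \subseteq W$ be a null line with $\rho L \cap L^\perp = \{0\}$, let $\alpha \in \mathbb{C} \setminus \{0\}$, and let $A$ be a skew-adjoint endomorphism of $W$, i.e. $(Ax, y) = -(x, Ay)$ for all $x, y \in W$. Then: (i) $A L \subseteq L \oplus (L \oplus \rho L)^\perp$ and $A (\rho L) \subseteq \rho L \oplus (L \oplus \rho L)^\perp$; and (ii) the map $\lambda \mapsto (\lambda^2 - \alpha^2)\, p_{\alpha,L}(\lambda) \circ A \circ p_{\alpha,L}(\lambda)^{-1}$, defined for $\lambda \in \mathbb{C} \setminus \{\alpha, -\alpha\}$, extends to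 a polynomial map $\mathbb{C} \to \mathrm{End}(W)$ of degree at most $2$ in $\lambda$; in particular $\lambda \mapsto p_{\alpha,L}(\lambda) \circ A \circ p_{\alpha,L}(\lambda)^{-1}$ has at most simple poles at $\lambda = \pm\alpha$. -/
open Module

/-- For `A` skew-adjoint: (i) `A L ⊆ L ⊕ (L ⊕ ρL)^⊥` and `A(ρL) ⊆ ρL ⊕ (L ⊕ ρL)^⊥`;
(ii) `λ ↦ (λ² - α²) p_{α,L}(λ) ∘ A ∘ p_{α,L}(λ)⁻¹` extends to a polynomial of degree at
most 2 in `λ`, so `λ ↦ p_{α,L}(λ) ∘ A ∘ p_{α,L}(λ)⁻¹` has at most simple poles at `±α`. -/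
theorem stmt9 {W : Type*} [AddCommGroup W] [Module ℂ W] [FiniteDimensional ℂ W]
    (B : LinearMap.BilinForm ℂ W) (hB : ∀ x y, B x y = B y x) (hBnd : B.Nondegenerate)
    (ρ : Module.End ℂ W) (hρ2 : ρ * ρ = 1) (hρB : ∀ x y, B (ρ x) (ρ y) = B x y)
    (L : Submodule ℂ W) (hL1 : Module.finrank ℂ L = 1) (hLnull : ∀ l ∈ L, B l l = 0)
    (hLρ : Submodule.map ρ L ⊓ B.orthogonal L = ⊥)
    (α : ℂ) (hα : α ≠ 0)
    (A : Module.End ℂ W) (hA : ∀ x y, B (A x) y = - B x (A y))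
    (P P' : ℂ → Module.End ℂ W)
    (hP : ∀ lam, lam ≠ α → lam ≠ -α →
      ActsAs B ρ L ((α - lam) / (α + lam)) ((α + lam) / (α - lam)) (P lam))
    (hP' : ∀ lam, lam ≠ α → lam ≠ -α → P lam * P' lam = 1 ∧ P' lam * P lam = 1) :
    (Submodule.map A L ≤ L ⊔ B.orthogonal (L ⊔ Submodule.map ρ L) ∧
      Submodule.map A (Submodule.map ρ L)
        ≤ Submodule.map ρ L ⊔ B.orthogonal (L ⊔ Submodule.map ρ L)) ∧
    ∃ C0 C1 C2 : Module.End ℂ W, ∀ lam, lam ≠ α → lam ≠ -α →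
      (lam ^ 2 - α ^ 2) • (P lam * A * P' lam) = C0 + lam • C1 + lam ^ 2 • C2 := by
  classical
  -- generator of L
  obtain ⟨l0, hl0L, hl0ne, hgenL⟩ :
      ∃ l0 : W, l0 ∈ L ∧ l0 ≠ 0 ∧ ∀ x ∈ L, ∃ a : ℂ, x = a • l0 := by
    obtain ⟨v, hv0, hvgen⟩ := finrank_eq_one_iff'.mp hL1
    refine ⟨(v : W), v.2, fun h => hv0 (Subtype.ext h), fun x hx => ?_⟩
    obtain ⟨a, ha⟩ := hvgen ⟨x, hx⟩
    exact ⟨a, by simpa using congrArg Subtype.val ha.symm⟩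
  set e : W := ρ l0 with hedef
  have hρρ : ∀ x, ρ (ρ x) = x := fun x => by
    have h := congrArg (fun f : Module.End ℂ W => f x) hρ2
    simpa using h
  have heρL : e ∈ Submodule.map ρ L := ⟨l0, hl0L, rfl⟩
  have hgenR : ∀ x ∈ Submodule.map ρ L, ∃ b : ℂ, x = b • e := by
    rintro x ⟨w, hw, rfl⟩
    obtain ⟨b, rfl⟩ := hgenL w hw
    exact ⟨b, by simp [hedef]⟩
  have hBl0l0 : B l0 l0 = 0 := hLnull l0 hl0L
  have hBee : B e e = 0 := by rw [hedef, hρB]; exact hBl0l0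
  set c : ℂ := B e l0 with hcdef
  have hBl0e : B l0 e = c := by rw [hB l0 e]
  have hc : c ≠ 0 := by
    intro hc0
    have heorth : e ∈ B.orthogonal L := by
      rw [LinearMap.BilinForm.mem_orthogonal_iff]
      intro n hn
      obtain ⟨a, rfl⟩ := hgenL n hn
      show B (a • l0) e = 0
      rw [map_smul, LinearMap.smul_apply, hBl0e, hc0, smul_zero]
    have hmem : e ∈ Submodule.map ρ L ⊓ B.orthogonal L := ⟨heρL, heorth⟩
    rw [hLρ, Submodule.mem_bot] at hmem
    exact hl0ne (by rw [← hρρ l0, ← hedef, hmem, map_zero])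
  -- projections
  set piL : Module.End ℂ W := c⁻¹ • (LinearMap.smulRight (B.flip e) l0) with hpiLdef
  set piR : Module.End ℂ W := c⁻¹ • (LinearMap.smulRight (B.flip l0) e) with hpiRdef
  have hpiL : ∀ x, piL x = (c⁻¹ * B x e) • l0 := by
    intro x; rw [hpiLdef]; simp [mul_smul, LinearMap.smulRight_apply]
  have hpiR : ∀ x, piR x = (c⁻¹ * B x l0) • e := by
    intro x; rw [hpiRdef]; simp [mul_smul, LinearMap.smulRight_apply]
  have hpiLmem : ∀ x, piL x ∈ L := fun x => by rw [hpiL]; exact L.smul_mem _ hl0L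
  have hpiRmem : ∀ x, piR x ∈ Submodule.map ρ L := fun x => by
    rw [hpiR]; exact Submodule.smul_mem _ _ heρL
  have hpiMmem : ∀ x, x - piL x - piR x ∈ B.orthogonal (L ⊔ Submodule.map ρ L) := by
    intro x
    rw [LinearMap.BilinForm.mem_orthogonal_iff]
    intro n hn
    obtain ⟨nl, hnl, nr, hnr, rfl⟩ := Submodule.mem_sup.mp hn
    obtain ⟨a, rfl⟩ := hgenL nl hnl
    obtain ⟨b, rfl⟩ := hgenR nr hnr
    show B (a • l0 + b • e) (x - piL x - piR x) = 0
    rw [hpiL, hpiR]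
    simp only [map_add, map_smul, map_sub, LinearMap.add_apply, LinearMap.smul_apply,
      LinearMap.sub_apply, smul_eq_mul]
    rw [hBl0l0, hBee, hBl0e, ← hcdef, hB l0 x, hB e x]
    field_simp
    ring
  -- projection identities
  have hpiLl0 : piL l0 = l0 := by
    rw [hpiL, hBl0e]; field_simp; exact one_smul _ _
  have hpiLe : piL e = 0 := by rw [hpiL, hBee]; simp
  have hpiRl0 : piR l0 = 0 := by rw [hpiR, hBl0l0]; simp
  have hpiRe : piR e = e := by
    rw [hpiR, ← hcdef]; field_simp; exact one_smul _ _
  have hLL : ∀ x, piL (piL x) = piL x := fun x => by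
    rw [hpiL x, map_smul, hpiLl0]
  have hLR : ∀ x, piL (piR x) = 0 := fun x => by
    rw [hpiR x, map_smul, hpiLe, smul_zero]
  have hRL : ∀ x, piR (piL x) = 0 := fun x => by
    rw [hpiL x, map_smul, hpiRl0, smul_zero]
  have hRR : ∀ x, piR (piR x) = piR x := fun x => by
    rw [hpiR x, map_smul, hpiRe]
  -- skew facts
  have hAl0 : B (A l0) l0 = 0 := by
    have h := hA l0 l0
    rw [hB l0 (A l0)] at h
    linear_combination h / 2
  have hAe : B (A e) e = 0 := by
    have h := hA e e
    rw [hB e (A e)] at h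
    linear_combination h / 2
  have hzL : ∀ x, piL (A (piR x)) = 0 := fun x => by
    rw [hpiR x, map_smul, map_smul, hpiL (A e), hAe, mul_zero, zero_smul, smul_zero]
  have hzR : ∀ x, piR (A (piL x)) = 0 := fun x => by
    rw [hpiL x, map_smul, map_smul, hpiR (A l0), hAl0, mul_zero, zero_smul, smul_zero]
  constructor
  · constructor
    · rintro y ⟨l, hl, rfl⟩
      have hR0 : piR (A l) = 0 := by
        obtain ⟨a, rfl⟩ := hgenL l hl
        rw [map_smul, map_smul, hpiR (A l0), hAl0, mul_zero, zero_smul, smul_zero]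
      have hrep : A l = piL (A l) + (A l - piL (A l) - piR (A l)) := by
        rw [hR0]; abel
      rw [hrep]
      exact Submodule.add_mem _ (Submodule.mem_sup_left (hpiLmem _))
        (Submodule.mem_sup_right (hpiMmem _))
    · rintro y ⟨z, hz, rfl⟩
      have hL0 : piL (A z) = 0 := by
        obtain ⟨b, rfl⟩ := hgenR z hz
        rw [map_smul, map_smul, hpiL (A e), hAe, mul_zero, zero_smul, smul_zero]
      have hrep : A z = piR (A z) + (A z - piL (A z) - piR (A z)) := by
        rw [hL0]; abel
      rw [hrep]
      exact Submodule.add_mem _ (Submodule.mem_sup_left (hpiRmem _))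
        (Submodule.mem_sup_right (hpiMmem _))
  · refine ⟨(-α ^ 2) • A,
      (2 * α) • (A * piR + piL * A - A * piL - piR * A),
      A - (2 : ℂ) • (A * piL + piR * A + A * piR + piL * A)
        + (4 : ℂ) • (piL * A * piL + piR * A * piR), ?_⟩
    intro lam h1 h2
    have hs : α + lam ≠ 0 := fun h => h2 (by linear_combination h)
    have ht : α - lam ≠ 0 := fun h => h1 (by linear_combination -h)
    obtain ⟨hPL, hPM, hPR⟩ := hP lam h1 h2
    set μ : ℂ := (α - lam) / (α + lam) with hμdef
    set ν : ℂ := (α + lam) / (α - lam) with hνdef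
    have hPeq : P lam = 1 + (μ - 1) • piL + (ν - 1) • piR := by
      apply LinearMap.ext; intro x
      have hx : x = piL x + (x - piL x - piR x) + piR x := by abel
      have h1' : P lam x = μ • piL x + (x - piL x - piR x) + ν • piR x := by
        conv_lhs => rw [hx]
        rw [map_add, map_add, hPL _ (hpiLmem x), hPM _ (hpiMmem x), hPR _ (hpiRmem x)]
      rw [h1']
      simp only [LinearMap.add_apply, LinearMap.smul_apply, Module.End.one_apply]
      module
    set Q : Module.End ℂ W := 1 + (ν - 1) • piL + (μ - 1) • piR with hQdef
    have hμν : μ * ν = 1 := by rw [hμdef, hνdef]; field_simp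
    have hPQ : P lam * Q = 1 := by
      rw [hPeq, hQdef]
      apply LinearMap.ext; intro x
      simp only [Module.End.mul_apply, LinearMap.add_apply, LinearMap.smul_apply,
        Module.End.one_apply, map_add, map_smul, hLL, hLR, hRL, hRR]
      have ht2 : -lam + α ≠ 0 := by rwa [neg_add_eq_sub]
      have hs2 : lam + α ≠ 0 := by rw [add_comm]; exact hs
      match_scalars
      all_goals try simp only [hμdef, hνdef]
      all_goals try field_simp [hs, ht, hs2, ht2]
      all_goals ring
    have hP'eq : P' lam = Q := by
      obtain ⟨hq1, hq2⟩ := hP' lam h1 h2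
      calc P' lam = P' lam * (P lam * Q) := by rw [hPQ, mul_one]
        _ = (P' lam * P lam) * Q := (mul_assoc _ _ _).symm
        _ = Q := by rw [hq2, one_mul]
    rw [hPeq, hP'eq, hQdef]
    apply LinearMap.ext; intro x
    simp only [LinearMap.smul_apply, LinearMap.add_apply, LinearMap.sub_apply,
      Module.End.mul_apply, Module.End.one_apply, map_add, map_smul, map_sub,
      hzL, hzR, smul_zero, add_zero, zero_add]
    have ht2 : -lam + α ≠ 0 := by rwa [neg_add_eq_sub]
    have hs2 : lam + α ≠ 0 := by rw [add_comm]; exact hs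
    match_scalars
    all_goals try simp only [hμdef, hνdef]
    all_goals try field_simp [hs, ht, hs2, ht2]
    all_goals ring
end

section
/- Let $L \subseteq W$ be a null line with $\rho L \cap L^\perp = \{0\}$ and let $\alpha \in \mathbb{C} \setminus \{0\}$. Let $U \subseteq \mathbb{C}$ be an open set with $-U = U$ and $\alpha, -\alpha \in U$, and let $F : U \to \mathrm{End}(W)$ be holomorphic such that each $F(\lambda)$ is skew-adjoint (i.e. $(F(\lambda)x, y) = -(x, F(\lambda)y)$ for all $x,y$), $\rho \circ F(\lambda) \circ \rho = F(-\lambda)$ for all $\lambda \in U$, and $F(\alpha)L \subseteq L$. Then the map $\lambda \mapsto p_{\alpha,L}(\lambda) \circ F(\lambda) \circ p_{\alpha,L}(\lambda)^{-1}$, defined on $U \setminus \{\alpha, -\alpha\}$, extends to a holomorphic map $U \to \mathrm{End}(W)$. -/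
/-- `ActsAsL B ρ L a b T`: the continuous endomorphism `T` acts as multiplication by `a`
on `L`, as the identity on `(L ⊕ ρL)^⊥`, and as multiplication by `b` on `ρL`. This is
the defining property of `p_{α,L}(λ)`. -/
def ActsAsL {W : Type*} [NormedAddCommGroup W] [NormedSpace ℂ W]
    (B : LinearMap.BilinForm ℂ W) (ρ : W →L[ℂ] W) (L : Submodule ℂ W)
    (a b : ℂ) (T : W →L[ℂ] W) : Prop :=
  (∀ x ∈ L, T x = a • x) ∧
  (∀ x ∈ B.orthogonal (L ⊔ Submodule.map (ρ : W →ₗ[ℂ] W) L), T x = x) ∧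
  (∀ x ∈ Submodule.map (ρ : W →ₗ[ℂ] W) L, T x = b • x)

lemma aux_dslope_diff {E : Type*} [NormedAddCommGroup E] [NormedSpace ℂ E] [CompleteSpace E]
    {U : Set ℂ} (hUo : IsOpen U) {f : ℂ → E} (hf : DifferentiableOn ℂ f U) {a : ℂ} :
    DifferentiableOn ℂ (dslope f a) U := by
  intro b hb
  rcases eq_or_ne b a with rfl | hne
  · obtain ⟨p, hp⟩ := hf.analyticAt (hUo.mem_nhds hb)
    exact hp.has_fpower_series_dslope_fslope.analyticAt.differentiableAt.differentiableWithinAt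
  · exact (differentiableWithinAt_dslope_of_ne hne).2 (hf b hb)

/-- If `F` is holomorphic on a symmetric open set `U ∋ ±α` with values in skew-adjoint
endomorphisms, `ρ ∘ F(λ) ∘ ρ = F(-λ)`, and `F(α) L ⊆ L`, then
`λ ↦ p_{α,L}(λ) ∘ F(λ) ∘ p_{α,L}(λ)⁻¹` extends holomorphically to all of `U`. -/
theorem stmt10 {W : Type*} [NormedAddCommGroup W] [NormedSpace ℂ W] [FiniteDimensional ℂ W]
    (B : LinearMap.BilinForm ℂ W) (hB : ∀ x y, B x y = B y x) (hBnd : B.Nondegenerate)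
    (ρ : W →L[ℂ] W) (hρ2 : ∀ x, ρ (ρ x) = x) (hρB : ∀ x y, B (ρ x) (ρ y) = B x y)
    (L : Submodule ℂ W) (hL1 : Module.finrank ℂ L = 1) (hLnull : ∀ l ∈ L, B l l = 0)
    (hLρ : Submodule.map (ρ : W →ₗ[ℂ] W) L ⊓ B.orthogonal L = ⊥)
    (α : ℂ) (hα : α ≠ 0)
    (U : Set ℂ) (hUo : IsOpen U) (hUsym : ∀ z ∈ U, -z ∈ U) (hαU : α ∈ U) (hαU' : -α ∈ U)
    (F : ℂ → W →L[ℂ] W) (hF : DifferentiableOn ℂ F U)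
    (hFsk : ∀ lam ∈ U, ∀ x y, B (F lam x) y = - B x (F lam y))
    (hFtw : ∀ lam ∈ U, ∀ x, ρ (F lam (ρ x)) = F (-lam) x)
    (hFα : ∀ x ∈ L, F α x ∈ L)
    (P P' : ℂ → W →L[ℂ] W)
    (hP : ∀ lam, lam ≠ α → lam ≠ -α →
      ActsAsL B ρ L ((α - lam) / (α + lam)) ((α + lam) / (α - lam)) (P lam))
    (hP' : ∀ lam, lam ≠ α → lam ≠ -α → P lam * P' lam = 1 ∧ P' lam * P lam = 1) :
    ∃ G : ℂ → W →L[ℂ] W, DifferentiableOn ℂ G U ∧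
      ∀ lam ∈ U, lam ≠ α → lam ≠ -α → G lam = P lam * F lam * P' lam := by
  classical
  -- a basis vector of L
  obtain ⟨v, hv0, hvspan⟩ := finrank_eq_one_iff'.mp hL1
  set l : W := (v : W) with hldef
  have hlL : l ∈ L := v.2
  have hl0 : l ≠ 0 := fun h => hv0 (by ext; simpa [hldef] using h)
  have hLmem : ∀ x ∈ L, ∃ t : ℂ, x = t • l := by
    intro x hx
    obtain ⟨t, ht⟩ := hvspan ⟨x, hx⟩
    exact ⟨t, by simpa [hldef] using congrArg (Subtype.val) ht.symm⟩
  have hρlL : ρ l ∈ Submodule.map (ρ : W →ₗ[ℂ] W) L := Submodule.mem_map_of_mem hlL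
  have hρLmem : ∀ x ∈ Submodule.map (ρ : W →ₗ[ℂ] W) L, ∃ t : ℂ, x = t • ρ l := by
    rintro x ⟨y, hy, rfl⟩
    obtain ⟨t, rfl⟩ := hLmem y hy
    exact ⟨t, by simp⟩
  set c : ℂ := B l (ρ l) with hcdef
  have hBll : B l l = 0 := hLnull l hlL
  have hBρρ : B (ρ l) (ρ l) = 0 := by rw [show B (ρ l) (ρ l) = B l l from hρB l l]; exact hBll
  have hBρl : B (ρ l) l = c := hB (ρ l) l ▸ rfl
  have hc : c ≠ 0 := by
    intro h
    have horth : ρ l ∈ B.orthogonal L := by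
      rw [LinearMap.BilinForm.mem_orthogonal_iff]
      intro n hn
      obtain ⟨t, rfl⟩ := hLmem n hn
      simp [LinearMap.BilinForm.isOrtho_def, ← hcdef, h]
    have hmem : ρ l ∈ Submodule.map (ρ : W →ₗ[ℂ] W) L ⊓ B.orthogonal L := Submodule.mem_inf.mpr ⟨hρlL, horth⟩
    rw [hLρ, Submodule.mem_bot] at hmem
    exact hl0 (by rw [← hρ2 l, hmem, map_zero])
  -- projections
  set πL : W →L[ℂ] W :=
    LinearMap.toContinuousLinearMap ((c⁻¹ • (B.flip (ρ l))).smulRight l) with hπLdef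
  set πρ : W →L[ℂ] W :=
    LinearMap.toContinuousLinearMap ((c⁻¹ • (B.flip l)).smulRight (ρ l)) with hπρdef
  set πM : W →L[ℂ] W := 1 - πL - πρ with hπMdef
  have hπL : ∀ x, πL x = (c⁻¹ * B x (ρ l)) • l := by
    intro x; simp [hπLdef, LinearMap.smulRight_apply]
  have hπρ : ∀ x, πρ x = (c⁻¹ * B x l) • ρ l := by
    intro x; simp [hπρdef, LinearMap.smulRight_apply]
  have hπM : ∀ x, πM x = x - πL x - πρ x := by
    intro x; simp [hπMdef]
  have hsum : ∀ x, πL x + πM x + πρ x = x := by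
    intro x; rw [hπM]; abel
  -- action on the three subspaces
  have hπL_L : ∀ x ∈ L, πL x = x := by
    rintro x hx; obtain ⟨t, rfl⟩ := hLmem x hx
    rw [hπL]
    have h1 : (B (t • l)) (ρ l) = t * c := by
      rw [map_smul]; simp [← hcdef]
    rw [h1, show c⁻¹ * (t * c) = t by field_simp]
  have hπρ_L : ∀ x ∈ L, πρ x = 0 := by
    rintro x hx; obtain ⟨t, rfl⟩ := hLmem x hx
    rw [hπρ, map_smul]; simp [hBll]
  have hπL_P : ∀ x ∈ Submodule.map (ρ : W →ₗ[ℂ] W) L, πL x = 0 := by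
    rintro x hx; obtain ⟨t, rfl⟩ := hρLmem x hx
    rw [hπL, map_smul]; simp [hBρρ]
  have hπρ_P : ∀ x ∈ Submodule.map (ρ : W →ₗ[ℂ] W) L, πρ x = x := by
    rintro x hx; obtain ⟨t, rfl⟩ := hρLmem x hx
    rw [hπρ]
    have h1 : (B (t • ρ l)) l = t * c := by
      rw [map_smul]; simp [hBρl]
    rw [h1, show c⁻¹ * (t * c) = t by field_simp]
  have hπM_L : ∀ x ∈ L, πM x = 0 := by
    intro x hx; rw [hπM, hπL_L x hx, hπρ_L x hx]; abel
  have hπM_P : ∀ x ∈ Submodule.map (ρ : W →ₗ[ℂ] W) L, πM x = 0 := by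
    intro x hx; rw [hπM, hπL_P x hx, hπρ_P x hx]; abel
  -- orthogonality facts for M
  set M : Submodule ℂ W := B.orthogonal (L ⊔ Submodule.map (ρ : W →ₗ[ℂ] W) L) with hMdef
  have hBlM : ∀ m ∈ M, B l m = 0 := by
    intro m hm
    exact (LinearMap.BilinForm.mem_orthogonal_iff.mp hm) l (Submodule.mem_sup_left hlL)
  have hBρlM : ∀ m ∈ M, B (ρ l) m = 0 := by
    intro m hm
    exact (LinearMap.BilinForm.mem_orthogonal_iff.mp hm) (ρ l) (Submodule.mem_sup_right hρlL)
  have hπL_M : ∀ x ∈ M, πL x = 0 := by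
    intro x hx; rw [hπL, hB x (ρ l), hBρlM x hx]; simp
  have hπρ_M : ∀ x ∈ M, πρ x = 0 := by
    intro x hx; rw [hπρ, hB x l, hBlM x hx]; simp
  have hπM_M : ∀ x ∈ M, πM x = x := by
    intro x hx; rw [hπM, hπL_M x hx, hπρ_M x hx]; abel
  -- ranges
  have hπL_mem : ∀ x, πL x ∈ L := by
    intro x; rw [hπL]; exact Submodule.smul_mem _ _ hlL
  have hπρ_mem : ∀ x, πρ x ∈ Submodule.map (ρ : W →ₗ[ℂ] W) L := by
    intro x; rw [hπρ]; exact Submodule.smul_mem _ _ hρlL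
  have hπM_mem : ∀ x, πM x ∈ M := by
    intro x
    rw [LinearMap.BilinForm.mem_orthogonal_iff]
    intro n hn
    rw [Submodule.mem_sup] at hn
    obtain ⟨y, hy, z, hz, rfl⟩ := hn
    obtain ⟨s, rfl⟩ := hLmem y hy
    obtain ⟨t, rfl⟩ := hρLmem z hz
    have h1 : B l (πM x) = 0 := by
      rw [hπM]
      simp only [map_sub]
      rw [hπL x, hπρ x, map_smul, map_smul]
      simp only [smul_eq_mul, ← hcdef, hBll]
      rw [hB l x]; field_simp; ring
    have h2 : B (ρ l) (πM x) = 0 := by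
      rw [hπM]
      simp only [map_sub]
      rw [hπL x, hπρ x, map_smul, map_smul]
      simp only [smul_eq_mul, hBρρ, hBρl]
      rw [hB (ρ l) x]; field_simp; ring
    simp [LinearMap.BilinForm.isOrtho_def, map_add, h1, h2]
  -- products of projections
  have mul_apply : ∀ (A C : W →L[ℂ] W) (x : W), (A * C) x = A (C x) := fun _ _ _ => rfl
  have eLL : πL * πL = πL := by ext x; rw [mul_apply]; exact hπL_L _ (hπL_mem x)
  have eρL : πρ * πL = 0 := by ext x; rw [mul_apply]; exact hπρ_L _ (hπL_mem x)
  have eML : πM * πL = 0 := by ext x; rw [mul_apply]; exact hπM_L _ (hπL_mem x)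
  have eLρ : πL * πρ = 0 := by ext x; rw [mul_apply]; exact hπL_P _ (hπρ_mem x)
  have eρρ : πρ * πρ = πρ := by ext x; rw [mul_apply]; exact hπρ_P _ (hπρ_mem x)
  have eMρ : πM * πρ = 0 := by ext x; rw [mul_apply]; exact hπM_P _ (hπρ_mem x)
  have eLM : πL * πM = 0 := by ext x; rw [mul_apply]; exact hπL_M _ (hπM_mem x)
  have eρM : πρ * πM = 0 := by ext x; rw [mul_apply]; exact hπρ_M _ (hπM_mem x)
  have eMM : πM * πM = πM := by ext x; rw [mul_apply]; exact hπM_M _ (hπM_mem x)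
  have eone : πL + πM + πρ = 1 := by ext x; simpa using hsum x
  -- vanishing blocks for every lam ∈ U
  have hZ1 : ∀ lam ∈ U, πL * F lam * πρ = 0 := by
    intro lam hlam
    ext x
    rw [mul_apply, mul_apply]
    obtain ⟨t, ht⟩ := hρLmem _ (hπρ_mem x)
    rw [ht, map_smul, map_smul, hπL]
    have : B (F lam (ρ l)) (ρ l) = 0 := by
      have h1 := hFsk lam hlam (ρ l) (ρ l)
      have h2 := hB (F lam (ρ l)) (ρ l)
      rw [h2, hB (ρ l) (F lam (ρ l))] at h1
      linear_combination h1 / 2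
    simp [this]
  have hZ2 : ∀ lam ∈ U, πρ * F lam * πL = 0 := by
    intro lam hlam
    ext x
    rw [mul_apply, mul_apply]
    obtain ⟨t, ht⟩ := hLmem _ (hπL_mem x)
    rw [ht, map_smul, map_smul, hπρ]
    have : B (F lam l) l = 0 := by
      have h1 := hFsk lam hlam l l
      rw [hB l (F lam l)] at h1
      linear_combination h1 / 2
    simp [this]
  -- the holomorphic pieces
  set D : ℂ → W →L[ℂ] W :=
    fun lam => πL * F lam * πL + πM * F lam * πM + πρ * F lam * πρ with hDdef
  set H₁ : ℂ → W →L[ℂ] W := fun lam => πM * F lam * πL + πρ * F lam * πM with hH₁def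
  set H₂ : ℂ → W →L[ℂ] W := fun lam => πL * F lam * πM + πM * F lam * πρ with hH₂def
  -- H₁ vanishes at α
  have hFαl : ∃ s : ℂ, F α l = s • l := by
    obtain ⟨s, hs⟩ := hLmem _ (hFα l hlL); exact ⟨s, hs⟩
  have hH₁0 : H₁ α = 0 := by
    ext x
    simp only [hH₁def]
    rw [ContinuousLinearMap.add_apply, mul_apply, mul_apply, mul_apply, mul_apply]
    have t1 : πM (F α (πL x)) = 0 := hπM_L _ (hFα _ (hπL_mem x))
    have t2 : πρ (F α (πM x)) = 0 := by
      rw [hπρ]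
      have : B (F α (πM x)) l = 0 := by
        rw [hFsk α hαU (πM x) l, hB (πM x) (F α l)]
        obtain ⟨s, hs⟩ := hFαl
        rw [hs, map_smul]
        simp [hBlM _ (hπM_mem x)]
      simp [this]
    rw [t1, t2]; simp
  -- H₂ vanishes at -α
  have hFρl : ∃ s : ℂ, F (-α) (ρ l) = s • ρ l := by
    obtain ⟨s, hs⟩ := hFαl
    refine ⟨s, ?_⟩
    have htw := hFtw α hαU (ρ l)
    rw [hρ2 l] at htw
    rw [← htw, hs, map_smul]
  have hH₂0 : H₂ (-α) = 0 := by
    ext x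
    simp only [hH₂def]
    rw [ContinuousLinearMap.add_apply, mul_apply, mul_apply, mul_apply, mul_apply]
    have t2 : πM (F (-α) (πρ x)) = 0 := by
      obtain ⟨t, ht⟩ := hρLmem _ (hπρ_mem x)
      obtain ⟨s, hs⟩ := hFρl
      rw [ht, map_smul, hs, map_smul,
        hπM_P _ (Submodule.smul_mem _ _ hρlL), smul_zero]
    have t1 : πL (F (-α) (πM x)) = 0 := by
      rw [hπL]
      have : B (F (-α) (πM x)) (ρ l) = 0 := by
        rw [hFsk (-α) hαU' (πM x) (ρ l), hB (πM x) (F (-α) (ρ l))]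
        obtain ⟨s, hs⟩ := hFρl
        rw [hs, map_smul]
        simp [hBρlM _ (hπM_mem x)]
      simp [this]
    rw [t1, t2]; simp
  -- differentiability
  have hcomp : ∀ (A C : W →L[ℂ] W), DifferentiableOn ℂ (fun lam => A * F lam * C) U := by
    intro A C
    have : (fun lam => A * F lam * C) = fun lam => (A.comp (F lam)).comp C := rfl
    rw [this]
    exact ((differentiableOn_const A).clm_comp hF).clm_comp (differentiableOn_const C)
  have hDd : DifferentiableOn ℂ D U := ((hcomp πL πL).add (hcomp πM πM)).add (hcomp πρ πρ)
  have hH₁d : DifferentiableOn ℂ H₁ U := (hcomp πM πL).add (hcomp πρ πM)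
  have hH₂d : DifferentiableOn ℂ H₂ U := (hcomp πL πM).add (hcomp πM πρ)
  refine ⟨fun lam => D lam - (α + lam) • dslope H₁ α lam + (α - lam) • dslope H₂ (-α) lam,
    ?_, ?_⟩
  · refine DifferentiableOn.add (DifferentiableOn.sub hDd ?_) ?_
    · exact ((differentiableOn_const α).add differentiableOn_id).smul
        (aux_dslope_diff hUo hH₁d)
    · exact ((differentiableOn_const α).sub differentiableOn_id).smul
        (aux_dslope_diff hUo hH₂d)
  · intro lam hlamU hne1 hne2
    show D lam - (α + lam) • dslope H₁ α lam + (α - lam) • dslope H₂ (-α) lam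
      = P lam * F lam * P' lam
    have ha1 : α - lam ≠ 0 := sub_ne_zero.mpr (Ne.symm hne1)
    have ha2 : α + lam ≠ 0 := by
      intro h; exact hne2 (eq_neg_of_add_eq_zero_right h)
    set a : ℂ := (α - lam) / (α + lam) with hadef
    set a' : ℂ := (α + lam) / (α - lam) with ha'def
    have haa' : a * a' = 1 := by rw [hadef, ha'def]; field_simp
    obtain ⟨h1, h2, h3⟩ := hP lam hne1 hne2
    -- decomposition of P lam
    have hPd : P lam = a • πL + πM + a' • πρ := by
      ext x
      conv_lhs => rw [← hsum x]
      rw [map_add, map_add, h1 _ (hπL_mem x), h2 _ (hπM_mem x), h3 _ (hπρ_mem x)]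
      rw [ContinuousLinearMap.add_apply, ContinuousLinearMap.add_apply,
        ContinuousLinearMap.smul_apply, ContinuousLinearMap.smul_apply]
    set Q : W →L[ℂ] W := a' • πL + πM + a • πρ with hQdef
    have ha'a : a' * a = 1 := by rw [mul_comm]; exact haa'
    have hQP : Q * P lam = 1 := by
      rw [hPd, hQdef]
      simp only [mul_add, add_mul, smul_mul_assoc, mul_smul_comm, smul_smul,
        eLL, eLρ, eρL, eρρ, eLM, eML, eMρ, eρM, eMM, smul_zero, add_zero, zero_add,
        haa', ha'a, one_smul]
      rw [← eone]
    have hP'd : P' lam = Q := by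
      have hpp := hP' lam hne1 hne2
      calc P' lam = 1 * P' lam := (one_mul _).symm
        _ = (Q * P lam) * P' lam := by rw [hQP]
        _ = Q * (P lam * P' lam) := by rw [mul_assoc]
        _ = Q := by rw [hpp.1, mul_one]
    -- expand P F P'
    have hexp : P lam * F lam * P' lam = D lam + a' • H₁ lam + a • H₂ lam := by
      have z1 := hZ1 lam hlamU
      have z2 := hZ2 lam hlamU
      show P lam * F lam * P' lam =
        (πL * F lam * πL + πM * F lam * πM + πρ * F lam * πρ)
        + a' • (πM * F lam * πL + πρ * F lam * πM)
        + a • (πL * F lam * πM + πM * F lam * πρ)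
      rw [hPd, hP'd, hQdef]
      simp only [mul_add, add_mul, smul_mul_assoc, mul_smul_comm, smul_smul, smul_add]
      rw [z1, z2]
      simp only [smul_zero, add_zero, zero_add, haa', ha'a, one_smul]
      abel
    rw [hexp]
    -- compute dslope values
    have hds1 : dslope H₁ α lam = (lam - α)⁻¹ • H₁ lam := by
      rw [dslope_of_ne _ hne1, slope_def_module, hH₁0, sub_zero]
    have hds2 : dslope H₂ (-α) lam = (lam + α)⁻¹ • H₂ lam := by
      rw [dslope_of_ne _ hne2, slope_def_module, hH₂0, sub_zero, sub_neg_eq_add]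
    rw [hds1, hds2, smul_smul, smul_smul]
    have s1 : (α + lam) * (lam - α)⁻¹ = -a' := by
      rw [ha'def, ← neg_sub α lam, inv_neg, div_eq_mul_inv]; ring
    have s2 : (α - lam) * (lam + α)⁻¹ = a := by
      rw [hadef, div_eq_mul_inv, add_comm lam α]
    rw [s1, s2, neg_smul, sub_neg_eq_add]
end

section
/- Suppose $W = L_1 \oplus L_0 \oplus L_{-1} = \hat{L}_1 \oplus \hat{L}_0 \oplus \hat{L}_{-1}$ are direct sum decompositions with $L_{\pm 1}$ and $\hat{L}_{\pm 1}$ null lines, $L_0 = (L_1 \oplus L_{-1})^\perp$ and $\hat{L}_0 = (\hat{L}_1 \oplus \hat{L}_{-1})^\perp$. For $\lambda \neq 0$ set $\gamma(\lambda) := \lambda\, \pi_{L_1} + \pi_{L_0} + \lambda^{-1} \pi_{L_{-1}}$ and $\hat{\gamma}(\lambda) := \lambda\, \pi_{\hat{L}_1} + \pi_{\hat{L}_0} + \lambda^{-1} \pi_{\hat{L}_{-1}}$, where $\pi$ denotes projection along the respective decomposition. Let $\xi$ be a holomorphic map from a neighborhood of $0$ in $\mathbb{C}$ into the orthogonal transformations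 of $W$ such that $L_1 = \xi(0)\hat{L}_1$. Then the map $\lambda \mapsto \gamma(\lambda)\, \xi(\lambda)\, \hat{\gamma}(\lambda)^{-1}$, defined for $\lambda \neq 0$ near $0$, extends holomorphically across $\lambda = 0$, and its value at $\lambda = 0$ is invertible. -/
section Aux
variable {W : Type*} [NormedAddCommGroup W] [NormedSpace ℂ W] [FiniteDimensional ℂ W]

lemma stmt11_null_pair (B : LinearMap.BilinForm ℂ W) (hB : ∀ x y, B x y = B y x)
    {N : Submodule ℂ W} (hN : ∀ x ∈ N, B x x = 0) {x y : W} (hx : x ∈ N) (hy : y ∈ N) :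
    B x y = 0 := by
  have h := hN (x + y) (add_mem hx hy)
  simp only [map_add, LinearMap.add_apply] at h
  rw [hN x hx, hN y hy, hB y x] at h
  have h2 : B x y + B x y = 0 := by linear_combination h
  exact add_self_eq_zero.mp h2

lemma stmt11_deriv_mem {N : Submodule ℂ W} {c : ℂ → W} {c' : W}
    (h : HasDerivAt c c' 0) (hc : ∀ t, c t ∈ N) : c' ∈ N := by
  have hcl : IsClosed (N : Set W) := Submodule.closed_of_finiteDimensional N
  refine hcl.mem_of_tendsto (hasDerivAt_iff_tendsto_slope.mp h) ?_
  filter_upwards with t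
  rw [slope_def_module]
  exact N.smul_mem _ (N.sub_mem (hc t) (hc 0))

lemma stmt11_exists_Bc (B : LinearMap.BilinForm ℂ W) :
    ∃ Bc : W →L[ℂ] W →L[ℂ] ℂ, ∀ x y, Bc x y = B x y := by
  refine ⟨LinearMap.toContinuousLinearMap
    { toFun := fun x => LinearMap.toContinuousLinearMap (B x),
      map_add' := fun x y => by ext z; simp,
      map_smul' := fun c x => by ext z; simp }, fun x y => by simp⟩

lemma stmt11_dslope_diff {E : Type*} [NormedAddCommGroup E] [NormedSpace ℂ E] [CompleteSpace E]
    {f : ℂ → E} {U : Set ℂ} (hU : IsOpen U) (h0 : (0:ℂ) ∈ U)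
    (hf : DifferentiableOn ℂ f U) : DifferentiableOn ℂ (dslope f 0) U := by
  intro x hx
  rcases eq_or_ne x 0 with rfl | hne
  · obtain ⟨p, hp⟩ := hf.analyticAt (hU.mem_nhds h0)
    exact hp.has_fpower_series_dslope_fslope.analyticAt.differentiableAt.differentiableWithinAt
  · exact (differentiableWithinAt_dslope_of_ne hne).2 (hf x hx)

end Aux

set_option maxHeartbeats 2000000 in
/-- Lemma of Isothermic-Surfaces type: given two decompositions
`W = L₁ ⊕ L₀ ⊕ L₋₁ = L̂₁ ⊕ L̂₀ ⊕ L̂₋₁` with `L±₁, L̂±₁` null lines and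
`L₀ = (L₁ ⊕ L₋₁)^⊥`, `L̂₀ = (L̂₁ ⊕ L̂₋₁)^⊥`, projections `π, π̂` along the respective
decompositions, `γ(λ) = λπ₁ + π₀ + λ⁻¹π₋₁`, `γ̂(λ) = λπ̂₁ + π̂₀ + λ⁻¹π̂₋₁`, and a
holomorphic map `ξ` into orthogonal transformations defined near `0` with
`L₁ = ξ(0) L̂₁`, the map `λ ↦ γ(λ) ξ(λ) γ̂(λ)⁻¹` extends holomorphically across `0`
with invertible value at `0`. -/
theorem stmt11 {W : Type*} [NormedAddCommGroup W] [NormedSpace ℂ W] [FiniteDimensional ℂ W]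
    (B : LinearMap.BilinForm ℂ W) (hB : ∀ x y, B x y = B y x) (hBnd : B.Nondegenerate)
    (L1 L0 Lm1 Lh1 Lh0 Lhm1 : Submodule ℂ W)
    (hL1 : Module.finrank ℂ L1 = 1) (hL1null : ∀ x ∈ L1, B x x = 0)
    (hLm1 : Module.finrank ℂ Lm1 = 1) (hLm1null : ∀ x ∈ Lm1, B x x = 0)
    (hLh1 : Module.finrank ℂ Lh1 = 1) (hLh1null : ∀ x ∈ Lh1, B x x = 0)
    (hLhm1 : Module.finrank ℂ Lhm1 = 1) (hLhm1null : ∀ x ∈ Lhm1, B x x = 0)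
    (hL0 : L0 = B.orthogonal (L1 ⊔ Lm1)) (hLh0 : Lh0 = B.orthogonal (Lh1 ⊔ Lhm1))
    (π1 π0 πm1 πh1 πh0 πhm1 : W →L[ℂ] W)
    (hsum : π1 + π0 + πm1 = 1) (hsumh : πh1 + πh0 + πhm1 = 1)
    (hrg1 : ∀ x, π1 x ∈ L1) (hrg0 : ∀ x, π0 x ∈ L0) (hrgm1 : ∀ x, πm1 x ∈ Lm1)
    (hrgh1 : ∀ x, πh1 x ∈ Lh1) (hrgh0 : ∀ x, πh0 x ∈ Lh0) (hrghm1 : ∀ x, πhm1 x ∈ Lhm1)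
    (hπ1 : ∀ x ∈ L1, π1 x = x ∧ π0 x = 0 ∧ πm1 x = 0)
    (hπ0 : ∀ x ∈ L0, π1 x = 0 ∧ π0 x = x ∧ πm1 x = 0)
    (hπm1 : ∀ x ∈ Lm1, π1 x = 0 ∧ π0 x = 0 ∧ πm1 x = x)
    (hπh1 : ∀ x ∈ Lh1, πh1 x = x ∧ πh0 x = 0 ∧ πhm1 x = 0)
    (hπh0 : ∀ x ∈ Lh0, πh1 x = 0 ∧ πh0 x = x ∧ πhm1 x = 0)
    (hπhm1 : ∀ x ∈ Lhm1, πh1 x = 0 ∧ πh0 x = 0 ∧ πhm1 x = x)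
    (U : Set ℂ) (hUo : IsOpen U) (h0U : (0 : ℂ) ∈ U)
    (ξ : ℂ → W →L[ℂ] W) (hξ : DifferentiableOn ℂ ξ U)
    (hξorth : ∀ lam ∈ U, IsUnit (ξ lam) ∧ ∀ x y, B (ξ lam x) (ξ lam y) = B x y)
    (hξ0 : Submodule.map ((ξ 0 : W →L[ℂ] W) : W →ₗ[ℂ] W) Lh1 = L1) :
    ∃ G : ℂ → W →L[ℂ] W, DifferentiableOn ℂ G U ∧
      (∀ lam : ℂ, lam ∈ U → lam ≠ 0 →
        (lam • πh1 + πh0 + lam⁻¹ • πhm1) * (lam⁻¹ • πh1 + πh0 + lam • πhm1) = 1 ∧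
        G lam = (lam • π1 + π0 + lam⁻¹ • πm1) * ξ lam * (lam⁻¹ • πh1 + πh0 + lam • πhm1)) ∧
      IsUnit (G 0) := by
  -- pointwise sums
  have hsumx : ∀ x : W, π1 x + π0 x + πm1 x = x := fun x => by
    have := DFunLike.congr_fun hsum x
    simpa using this
  have hsumhx : ∀ x : W, πh1 x + πh0 x + πhm1 x = x := fun x => by
    have := DFunLike.congr_fun hsumh x
    simpa using this
  obtain ⟨hξ0unit, hξ0orth⟩ := hξorth 0 h0U
  have hξ0inj : Function.Injective (ξ 0) :=
    (ContinuousLinearMap.isUnit_iff_bijective.mp hξ0unit).1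
  have hmapl : ∀ v ∈ Lh1, ξ 0 v ∈ L1 := fun v hv => hξ0 ▸ Submodule.mem_map_of_mem hv
  -- orthogonality helpers
  have horth : ∀ b ∈ L0, ∀ a, a ∈ L1 ⊔ Lm1 → B a b = 0 := by
    intro b hb a ha
    rw [hL0] at hb
    exact (LinearMap.BilinForm.mem_orthogonal_iff.mp hb) a ha
  have horthh : ∀ b ∈ Lh0, ∀ a, a ∈ Lh1 ⊔ Lhm1 → B a b = 0 := by
    intro b hb a ha
    rw [hLh0] at hb
    exact (LinearMap.BilinForm.mem_orthogonal_iff.mp hb) a ha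
  have hBzero : ∀ m ∈ Lm1, (∀ a ∈ L1, B a m = 0) → m = 0 := by
    intro m hm hL1m
    refine hBnd.1 m fun n => ?_
    rw [hB]
    have hd : B n m = B (π1 n) m + B (π0 n) m + B (πm1 n) m := by
      conv_lhs => rw [← hsumx n]
      simp [map_add]
    have h0 : B (π0 n) m = 0 := by
      rw [hB]; exact horth (π0 n) (hrg0 n) m (Submodule.mem_sup_right hm)
    rw [hd, hL1m _ (hrg1 n), h0, stmt11_null_pair B hB hLm1null (hrgm1 n) hm]
    ring
  have hBzeroh : ∀ m ∈ Lhm1, (∀ a ∈ Lh1, B m a = 0) → m = 0 := by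
    intro m hm hL1m
    refine hBnd.1 m fun n => ?_
    have hd : B m n = B m (πh1 n) + B m (πh0 n) + B m (πhm1 n) := by
      conv_lhs => rw [← hsumhx n]
      simp [map_add]
    rw [hd, hL1m _ (hrgh1 n),
      horthh (πh0 n) (hrgh0 n) m (Submodule.mem_sup_right hm),
      stmt11_null_pair B hB hLhm1null hm (hrghm1 n)]
    ring
  have hspan : ∀ u ∈ L1, u ≠ 0 → ∀ a ∈ L1, ∃ k : ℂ, a = k • u := by
    intro u hu hu0 a ha
    have h1 : Submodule.span ℂ {u} = L1 := by
      apply Submodule.eq_of_le_of_finrank_le (Submodule.span_le.mpr (by simpa using hu))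
      rw [hL1, finrank_span_singleton hu0]
    rw [← h1] at ha
    obtain ⟨k, hk⟩ := Submodule.mem_span_singleton.mp ha
    exact ⟨k, hk.symm⟩
  -- zeros at 0
  have hz01 : ∀ v ∈ Lh1, π0 (ξ 0 v) = 0 := fun v hv => (hπ1 _ (hmapl v hv)).2.1
  have hz21 : ∀ v ∈ Lh1, πm1 (ξ 0 v) = 0 := fun v hv => (hπ1 _ (hmapl v hv)).2.2
  have hz20 : ∀ v ∈ Lh0, πm1 (ξ 0 v) = 0 := by
    intro v hv
    apply hBzero _ (hrgm1 _)
    intro a ha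
    rw [← hξ0] at ha
    obtain ⟨w, hw, rfl⟩ := ha
    have h1 : B (ξ 0 w) (ξ 0 v) = 0 := by
      rw [hξ0orth]; exact horthh v hv w (Submodule.mem_sup_left hw)
    have hd : B (ξ 0 w) (ξ 0 v)
        = B (ξ 0 w) (π1 (ξ 0 v)) + B (ξ 0 w) (π0 (ξ 0 v)) + B (ξ 0 w) (πm1 (ξ 0 v)) := by
      conv_lhs => rw [← hsumx (ξ 0 v)]
      simp [map_add]
    rw [h1, stmt11_null_pair B hB hL1null (hmapl w hw) (hrg1 _),
      horth _ (hrg0 _) _ (Submodule.mem_sup_left (hmapl w hw))] at hd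
    linear_combination -hd
  -- derivative of ξ at 0
  have hΞd : HasDerivAt ξ (deriv ξ 0) 0 :=
    (hξ.differentiableAt (hUo.mem_nhds h0U)).hasDerivAt
  set Ξ := deriv ξ 0 with hΞdef
  obtain ⟨Bc, hBc⟩ := stmt11_exists_Bc B
  -- the key second-order vanishing
  have hkey : ∀ v ∈ Lh1, πm1 (Ξ v) = 0 := by
    intro v hv
    rcases eq_or_ne v 0 with rfl | hv0
    · simp
    have hw : HasDerivAt (fun t => ξ t v) (Ξ v) 0 := by
      simpa using hΞd.clm_apply (hasDerivAt_const 0 v)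
    have ha : HasDerivAt (fun t => π1 (ξ t v)) (π1 (Ξ v)) 0 := by
      simpa using (hasDerivAt_const (0:ℂ) π1).clm_apply hw
    have hb : HasDerivAt (fun t => π0 (ξ t v)) (π0 (Ξ v)) 0 := by
      simpa using (hasDerivAt_const (0:ℂ) π0).clm_apply hw
    have hc : HasDerivAt (fun t => πm1 (ξ t v)) (πm1 (Ξ v)) 0 := by
      simpa using (hasDerivAt_const (0:ℂ) πm1).clm_apply hw
    have hBb : HasDerivAt (fun t => Bc (π0 (ξ t v))) (Bc (π0 (Ξ v))) 0 := by
      simpa using (hasDerivAt_const (0:ℂ) Bc).clm_apply hb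
    have hBa : HasDerivAt (fun t => Bc (π1 (ξ t v))) (Bc (π1 (Ξ v))) 0 := by
      simpa using (hasDerivAt_const (0:ℂ) Bc).clm_apply ha
    have hφd : HasDerivAt
        (fun t => Bc (π0 (ξ t v)) (π0 (ξ t v)) + 2 * Bc (π1 (ξ t v)) (πm1 (ξ t v)))
        (Bc (π0 (Ξ v)) (π0 (ξ 0 v)) + Bc (π0 (ξ 0 v)) (π0 (Ξ v))
          + 2 * (Bc (π1 (Ξ v)) (πm1 (ξ 0 v)) + Bc (π1 (ξ 0 v)) (πm1 (Ξ v)))) 0 :=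
      (hBb.clm_apply hb).add ((hBa.clm_apply hc).const_mul 2)
    have hφ0 : ∀ t ∈ U,
        Bc (π0 (ξ t v)) (π0 (ξ t v)) + 2 * Bc (π1 (ξ t v)) (πm1 (ξ t v)) = 0 := by
      intro t ht
      have hBw : B (ξ t v) (ξ t v) = 0 := by
        rw [(hξorth t ht).2]; exact hLh1null v hv
      have hd : B (ξ t v) (ξ t v)
          = B (π1 (ξ t v)) (π1 (ξ t v)) + B (π1 (ξ t v)) (π0 (ξ t v))
            + B (π1 (ξ t v)) (πm1 (ξ t v)) + B (π0 (ξ t v)) (π1 (ξ t v))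
            + B (π0 (ξ t v)) (π0 (ξ t v)) + B (π0 (ξ t v)) (πm1 (ξ t v))
            + B (πm1 (ξ t v)) (π1 (ξ t v)) + B (πm1 (ξ t v)) (π0 (ξ t v))
            + B (πm1 (ξ t v)) (πm1 (ξ t v)) := by
        conv_lhs => rw [← hsumx (ξ t v)]
        simp only [map_add, LinearMap.add_apply]
        ring
      set w := ξ t v
      have e1 : B (π1 w) (π1 w) = 0 := stmt11_null_pair B hB hL1null (hrg1 w) (hrg1 w)
      have e2 : B (π1 w) (π0 w) = 0 := horth _ (hrg0 w) _ (Submodule.mem_sup_left (hrg1 w))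
      have e3 : B (π0 w) (π1 w) = 0 := by rw [hB]; exact e2
      have e4 : B (π0 w) (πm1 w) = 0 := by
        rw [hB]; exact horth _ (hrg0 w) _ (Submodule.mem_sup_right (hrgm1 w))
      have e5 : B (πm1 w) (π0 w) = 0 := horth _ (hrg0 w) _ (Submodule.mem_sup_right (hrgm1 w))
      have e6 : B (πm1 w) (πm1 w) = 0 := stmt11_null_pair B hB hLm1null (hrgm1 w) (hrgm1 w)
      have e7 : B (πm1 w) (π1 w) = B (π1 w) (πm1 w) := hB _ _
      rw [hBw, e1, e2, e3, e4, e5, e6, e7] at hd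
      rw [hBc, hBc]
      linear_combination -hd
    have hφz : (fun t => Bc (π0 (ξ t v)) (π0 (ξ t v)) + 2 * Bc (π1 (ξ t v)) (πm1 (ξ t v)))
        =ᶠ[nhds (0:ℂ)] fun _ => (0:ℂ) :=
      Filter.eventuallyEq_of_mem (hUo.mem_nhds h0U) hφ0
    have hφd0 : HasDerivAt
        (fun t => Bc (π0 (ξ t v)) (π0 (ξ t v)) + 2 * Bc (π1 (ξ t v)) (πm1 (ξ t v)))
        0 0 := by
      exact (hasDerivAt_const (0:ℂ) (0:ℂ)).congr_of_eventuallyEq hφz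
    have hD0 : Bc (π0 (Ξ v)) (π0 (ξ 0 v)) + Bc (π0 (ξ 0 v)) (π0 (Ξ v))
        + 2 * (Bc (π1 (Ξ v)) (πm1 (ξ 0 v)) + Bc (π1 (ξ 0 v)) (πm1 (Ξ v))) = 0 :=
      hφd.unique hφd0
    rw [hz01 v hv, hz21 v hv] at hD0
    simp only [map_zero, ContinuousLinearMap.zero_apply, zero_add, add_zero] at hD0
    have hBac : B (ξ 0 v) (πm1 (Ξ v)) = 0 := by
      have h2 : (2:ℂ) ≠ 0 := two_ne_zero
      have := mul_eq_zero.mp hD0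
      rcases this with h | h
      · exact absurd h h2
      · have ha0 : π1 (ξ 0 v) = ξ 0 v := (hπ1 _ (hmapl v hv)).1
        rw [← hBc, ← ha0]
        exact h
    have hu0 : ξ 0 v ≠ 0 := by
      intro h
      exact hv0 (hξ0inj (by simpa using h))
    apply hBzero _ (hrgm1 _)
    intro aa haa
    obtain ⟨k, rfl⟩ := hspan (ξ 0 v) (hmapl v hv) hu0 aa haa
    simp [map_smul, hBac]
  -- differentiability of building blocks
  have hdf : ∀ p q : W →L[ℂ] W, DifferentiableOn ℂ (fun t => p * ξ t * q) U :=
    fun p q => ((differentiableOn_const p).mul hξ).mul (differentiableOn_const q)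
  have hclm_deriv : ∀ p q : W →L[ℂ] W, ∀ x : W,
      HasDerivAt (fun t => p (ξ t (q x))) (p (Ξ (q x))) 0 := by
    intro p q x
    have hw : HasDerivAt (fun t => ξ t (q x)) (Ξ (q x)) 0 := by
      simpa using hΞd.clm_apply (hasDerivAt_const 0 (q x))
    simpa using (hasDerivAt_const (0:ℂ) p).clm_apply hw
  have hf21d : HasDerivAt (fun t => πm1 * ξ t * πh1)
      (deriv (fun t => πm1 * ξ t * πh1) 0) 0 :=
    ((hdf πm1 πh1).differentiableAt (hUo.mem_nhds h0U)).hasDerivAt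
  have hderiv21 : deriv (fun t => πm1 * ξ t * πh1) 0 = 0 := by
    ext x
    have h2 : HasDerivAt (fun t => (πm1 * ξ t * πh1) x)
        ((deriv (fun t => πm1 * ξ t * πh1) 0) x) 0 := by
      simpa using hf21d.clm_apply (hasDerivAt_const 0 x)
    have h3 : HasDerivAt (fun t => (πm1 * ξ t * πh1) x) (πm1 (Ξ (πh1 x))) 0 := by
      simpa only [ContinuousLinearMap.mul_apply] using hclm_deriv πm1 πh1 x
    rw [h2.unique h3, hkey (πh1 x) (hrgh1 x)]
    simp
  -- zero values at 0 (as continuous linear maps)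
  have hf01_0 : π0 * ξ 0 * πh1 = 0 := ContinuousLinearMap.ext fun x => by
    simp [ContinuousLinearMap.mul_apply, hz01 _ (hrgh1 x)]
  have hf21_0 : πm1 * ξ 0 * πh1 = 0 := ContinuousLinearMap.ext fun x => by
    simp [ContinuousLinearMap.mul_apply, hz21 _ (hrgh1 x)]
  have hf20_0 : πm1 * ξ 0 * πh0 = 0 := ContinuousLinearMap.ext fun x => by
    simp [ContinuousLinearMap.mul_apply, hz20 _ (hrgh0 x)]
  -- the three singular pieces
  set A : ℂ → W →L[ℂ] W := dslope (fun t => π0 * ξ t * πh1) 0 with hAdef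
  set Dd : ℂ → W →L[ℂ] W := dslope (fun t => πm1 * ξ t * πh0) 0 with hDdef
  set Fc : ℂ → W →L[ℂ] W := dslope (fun t => πm1 * ξ t * πh1) 0 with hFcdef
  set Cc : ℂ → W →L[ℂ] W := dslope Fc 0 with hCcdef
  have hAne : ∀ t ≠ (0:ℂ), A t = t⁻¹ • (π0 * ξ t * πh1) := by
    intro t ht
    rw [hAdef, dslope_of_ne _ ht, slope_def_module, hf01_0]
    simp
  have hDne : ∀ t ≠ (0:ℂ), Dd t = t⁻¹ • (πm1 * ξ t * πh0) := by
    intro t ht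
    rw [hDdef, dslope_of_ne _ ht, slope_def_module, hf20_0]
    simp
  have hFcne : ∀ t ≠ (0:ℂ), Fc t = t⁻¹ • (πm1 * ξ t * πh1) := by
    intro t ht
    rw [hFcdef, dslope_of_ne _ ht, slope_def_module, hf21_0]
    simp
  have hFc0 : Fc 0 = 0 := by rw [hFcdef, dslope_same, hderiv21]
  have hCne : ∀ t ≠ (0:ℂ), Cc t = (t⁻¹ * t⁻¹) • (πm1 * ξ t * πh1) := by
    intro t ht
    rw [hCcdef, dslope_of_ne _ ht, slope_def_module, hFc0, sub_zero, hFcne t ht]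
    rw [sub_zero, smul_smul]
  refine ⟨fun t => π1 * ξ t * πh1 + π0 * ξ t * πh0 + πm1 * ξ t * πhm1
      + t • (π1 * ξ t * πh0 + π0 * ξ t * πhm1) + (t * t) • (π1 * ξ t * πhm1)
      + A t + Cc t + Dd t, ?_, ?_, ?_⟩
  · -- differentiability
    have hAd : DifferentiableOn ℂ A U := by
      rw [hAdef]; exact stmt11_dslope_diff hUo h0U (hdf π0 πh1)
    have hDd : DifferentiableOn ℂ Dd U := by
      rw [hDdef]; exact stmt11_dslope_diff hUo h0U (hdf πm1 πh0)
    have hCd : DifferentiableOn ℂ Cc U := by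
      rw [hCcdef, hFcdef]
      exact stmt11_dslope_diff hUo h0U (stmt11_dslope_diff hUo h0U (hdf πm1 πh1))
    exact (((((((hdf π1 πh1).add (hdf π0 πh0)).add (hdf πm1 πhm1)).add
      ((differentiableOn_id : DifferentiableOn ℂ (fun t : ℂ => t) U).smul ((hdf π1 πh0).add (hdf π0 πhm1)))).add
      (((differentiableOn_id : DifferentiableOn ℂ (fun t : ℂ => t) U).mul (differentiableOn_id : DifferentiableOn ℂ (fun t : ℂ => t) U)).smul (hdf π1 πhm1))).add
      hAd).add hCd).add hDd
  · -- the identities for lam ≠ 0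
    intro lam hlam hne
    have e11 : πh1 * πh1 = πh1 := ContinuousLinearMap.ext fun x => by
      simp only [ContinuousLinearMap.mul_apply]; exact (hπh1 _ (hrgh1 x)).1
    have e01 : πh0 * πh1 = 0 := ContinuousLinearMap.ext fun x => by
      simp only [ContinuousLinearMap.mul_apply, ContinuousLinearMap.zero_apply]
      exact (hπh1 _ (hrgh1 x)).2.1
    have em1 : πhm1 * πh1 = 0 := ContinuousLinearMap.ext fun x => by
      simp only [ContinuousLinearMap.mul_apply, ContinuousLinearMap.zero_apply]
      exact (hπh1 _ (hrgh1 x)).2.2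
    have e10 : πh1 * πh0 = 0 := ContinuousLinearMap.ext fun x => by
      simp only [ContinuousLinearMap.mul_apply, ContinuousLinearMap.zero_apply]
      exact (hπh0 _ (hrgh0 x)).1
    have e00 : πh0 * πh0 = πh0 := ContinuousLinearMap.ext fun x => by
      simp only [ContinuousLinearMap.mul_apply]; exact (hπh0 _ (hrgh0 x)).2.1
    have em0 : πhm1 * πh0 = 0 := ContinuousLinearMap.ext fun x => by
      simp only [ContinuousLinearMap.mul_apply, ContinuousLinearMap.zero_apply]
      exact (hπh0 _ (hrgh0 x)).2.2
    have e1m : πh1 * πhm1 = 0 := ContinuousLinearMap.ext fun x => by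
      simp only [ContinuousLinearMap.mul_apply, ContinuousLinearMap.zero_apply]
      exact (hπhm1 _ (hrghm1 x)).1
    have e0m : πh0 * πhm1 = 0 := ContinuousLinearMap.ext fun x => by
      simp only [ContinuousLinearMap.mul_apply, ContinuousLinearMap.zero_apply]
      exact (hπhm1 _ (hrghm1 x)).2.1
    have emm : πhm1 * πhm1 = πhm1 := ContinuousLinearMap.ext fun x => by
      simp only [ContinuousLinearMap.mul_apply]; exact (hπhm1 _ (hrghm1 x)).2.2
    constructor
    · simp only [add_mul, mul_add, smul_mul_assoc, mul_smul_comm, smul_smul,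
        e11, e01, em1, e10, e00, em0, e1m, e0m, emm, smul_zero, add_zero, zero_add,
        mul_inv_cancel₀ hne, inv_mul_cancel₀ hne, one_smul]
      exact hsumh
    · beta_reduce
      rw [hAne lam hne, hCne lam hne, hDne lam hne]
      simp only [add_mul, mul_add, smul_mul_assoc, mul_smul_comm, smul_add, smul_smul,
        mul_inv_cancel₀ hne, inv_mul_cancel₀ hne, one_smul]
      module
  · -- invertibility at 0
    -- membership and kernel facts for A 0, Cc 0, Dd 0
    have happly : ∀ p q : W →L[ℂ] W, ∀ x : W,
        HasDerivAt (fun t => (p * ξ t * q) x) (deriv (fun t => p * ξ t * q) 0 x) 0 := by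
      intro p q x
      have hd : HasDerivAt (fun t => p * ξ t * q) (deriv (fun t => p * ξ t * q) 0) 0 :=
        ((hdf p q).differentiableAt (hUo.mem_nhds h0U)).hasDerivAt
      simpa using hd.clm_apply (hasDerivAt_const 0 x)
    have hA0eq : A 0 = deriv (fun t => π0 * ξ t * πh1) 0 := by rw [hAdef, dslope_same]
    have hD0eq : Dd 0 = deriv (fun t => πm1 * ξ t * πh0) 0 := by rw [hDdef, dslope_same]
    have hA0mem : ∀ x, A 0 x ∈ L0 := by
      intro x
      rw [hA0eq]
      exact stmt11_deriv_mem (happly π0 πh1 x) fun t => by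
        simp only [ContinuousLinearMap.mul_apply]; exact hrg0 _
    have hD0mem : ∀ x, Dd 0 x ∈ Lm1 := by
      intro x
      rw [hD0eq]
      exact stmt11_deriv_mem (happly πm1 πh0 x) fun t => by
        simp only [ContinuousLinearMap.mul_apply]; exact hrgm1 _
    have hA0ker : ∀ x, πh1 x = 0 → A 0 x = 0 := by
      intro x hx
      have h1 := happly π0 πh1 x
      have hcst : (fun t => (π0 * ξ t * πh1) x) = fun _ => (0:W) := funext fun t => by
        simp [ContinuousLinearMap.mul_apply, hx]
      rw [hcst] at h1
      rw [hA0eq]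
      exact h1.unique (hasDerivAt_const 0 0)
    have hD0ker : ∀ x, πh0 x = 0 → Dd 0 x = 0 := by
      intro x hx
      have h1 := happly πm1 πh0 x
      have hcst : (fun t => (πm1 * ξ t * πh0) x) = fun _ => (0:W) := funext fun t => by
        simp [ContinuousLinearMap.mul_apply, hx]
      rw [hcst] at h1
      rw [hD0eq]
      exact h1.unique (hasDerivAt_const 0 0)
    have hFcd : DifferentiableOn ℂ Fc U := by
      rw [hFcdef]; exact stmt11_dslope_diff hUo h0U (hdf πm1 πh1)
    have hC0eq : Cc 0 = deriv Fc 0 := by rw [hCcdef, dslope_same]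
    have hFcapply : ∀ x : W, HasDerivAt (fun t => Fc t x) (deriv Fc 0 x) 0 := by
      intro x
      have hd : HasDerivAt Fc (deriv Fc 0) 0 :=
        (hFcd.differentiableAt (hUo.mem_nhds h0U)).hasDerivAt
      simpa using hd.clm_apply (hasDerivAt_const 0 x)
    have hC0mem : ∀ x, Cc 0 x ∈ Lm1 := by
      intro x
      rw [hC0eq]
      refine stmt11_deriv_mem (hFcapply x) fun t => ?_
      rcases eq_or_ne t 0 with rfl | ht
      · rw [hFc0]; simp
      · rw [hFcne t ht]
        simp only [ContinuousLinearMap.smul_apply, ContinuousLinearMap.mul_apply]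
        exact Lm1.smul_mem _ (hrgm1 _)
    have hC0ker : ∀ x, πh1 x = 0 → Cc 0 x = 0 := by
      intro x hx
      have h1 := hFcapply x
      have hcst : (fun t => Fc t x) = fun _ => (0:W) := funext fun t => by
        rcases eq_or_ne t 0 with rfl | ht
        · rw [hFc0]; simp
        · rw [hFcne t ht]
          simp [ContinuousLinearMap.smul_apply, ContinuousLinearMap.mul_apply, hx]
      rw [hcst] at h1
      rw [hC0eq]
      exact h1.unique (hasDerivAt_const 0 0)
    -- the value at 0
    have hG0eq : (fun t : ℂ => π1 * ξ t * πh1 + π0 * ξ t * πh0 + πm1 * ξ t * πhm1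
        + t • (π1 * ξ t * πh0 + π0 * ξ t * πhm1) + (t * t) • (π1 * ξ t * πhm1)
        + A t + Cc t + Dd t) 0
        = π1 * ξ 0 * πh1 + π0 * ξ 0 * πh0 + πm1 * ξ 0 * πhm1 + A 0 + Cc 0 + Dd 0 := by
      simp
    rw [hG0eq, ContinuousLinearMap.isUnit_iff_bijective]
    set S : W →L[ℂ] W := π1 * ξ 0 * πh1 + π0 * ξ 0 * πh0 + πm1 * ξ 0 * πhm1
        + A 0 + Cc 0 + Dd 0 with hSdef
    have hSx : ∀ x, S x = π1 (ξ 0 (πh1 x)) + π0 (ξ 0 (πh0 x)) + πm1 (ξ 0 (πhm1 x))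
        + A 0 x + Cc 0 x + Dd 0 x := by
      intro x
      simp [hSdef, ContinuousLinearMap.add_apply, ContinuousLinearMap.mul_apply]
    have hker : ∀ x, S x = 0 → x = 0 := by
      intro x hx0
      -- step 1 : the πh1-component vanishes
      have hx1 : πh1 x = 0 := by
        have h1 : π1 (S x) = π1 (ξ 0 (πh1 x)) := by
          rw [hSx x]
          simp only [map_add]
          rw [(hπ1 _ (hrg1 _)).1, (hπ0 _ (hrg0 _)).1, (hπm1 _ (hrgm1 _)).1,
            (hπ0 _ (hA0mem x)).1, (hπm1 _ (hC0mem x)).1, (hπm1 _ (hD0mem x)).1]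
          abel
        rw [hx0, map_zero] at h1
        have h2 : ξ 0 (πh1 x) = 0 := by
          rw [← (hπ1 _ (hmapl _ (hrgh1 x))).1, ← h1]
        exact hξ0inj (by simpa using h2)
      -- step 2 : the πh0-component vanishes
      have hx0c : πh0 x = 0 := by
        have h1 : π0 (S x) = π0 (ξ 0 (πh0 x)) := by
          rw [hSx x]
          simp only [map_add]
          rw [(hπ1 _ (hrg1 _)).2.1, (hπ0 _ (hrg0 _)).2.1, (hπm1 _ (hrgm1 _)).2.1,
            (hπ0 _ (hA0mem x)).2.1, (hπm1 _ (hC0mem x)).2.1, (hπm1 _ (hD0mem x)).2.1,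
            hA0ker x hx1]
          abel
        rw [hx0, map_zero] at h1
        have h2 : πm1 (ξ 0 (πh0 x)) = 0 := hz20 _ (hrgh0 x)
        have h3 : ξ 0 (πh0 x) = π1 (ξ 0 (πh0 x)) := by
          have hs := hsumx (ξ 0 (πh0 x))
          rw [← h1, h2] at hs
          simpa using hs.symm
        obtain ⟨w, hw, hwv⟩ : ∃ w ∈ Lh1, ξ 0 w = ξ 0 (πh0 x) := by
          have : π1 (ξ 0 (πh0 x)) ∈ L1 := hrg1 _
          rw [← hξ0] at this
          obtain ⟨w, hw, hweq⟩ := this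
          exact ⟨w, hw, by rw [h3]; exact hweq⟩
        have hv : πh0 x ∈ Lh1 := hξ0inj hwv ▸ hw
        have := (hπh1 _ hv).1
        rw [(hπh0 _ (hrgh0 x)).1] at this
        exact this.symm
      -- step 3 : the πhm1-component vanishes
      have hxm : πhm1 x = 0 := by
        have h1 : πm1 (S x) = πm1 (ξ 0 (πhm1 x)) := by
          rw [hSx x]
          simp only [map_add]
          rw [(hπ1 _ (hrg1 _)).2.2, (hπ0 _ (hrg0 _)).2.2, (hπm1 _ (hrgm1 _)).2.2,
            (hπ0 _ (hA0mem x)).2.2, hC0ker x hx1, hD0ker x hx0c]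
          simp
        rw [hx0, map_zero] at h1
        refine hBzeroh _ (hrghm1 x) fun a ha => ?_
        rw [← hξ0orth (πhm1 x) a]
        have hdv : ξ 0 (πhm1 x) = π1 (ξ 0 (πhm1 x)) + π0 (ξ 0 (πhm1 x)) := by
          have hs := hsumx (ξ 0 (πhm1 x))
          rw [← h1] at hs
          simpa using hs.symm
        rw [hdv]
        simp only [map_add, LinearMap.add_apply]
        rw [stmt11_null_pair B hB hL1null (hrg1 _) (hmapl a ha)]
        have hz2 : B (π0 (ξ 0 (πhm1 x))) (ξ 0 a) = 0 := by
          rw [hB]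
          exact horth _ (hrg0 _) _ (Submodule.mem_sup_left (hmapl a ha))
        rw [hz2]
        ring
      rw [← hsumhx x, hx1, hx0c, hxm]
      simp
    have hinj : Function.Injective ⇑S := by
      intro a b hab
      have h0 : S (a - b) = 0 := by rw [map_sub, hab, sub_self]
      exact sub_eq_zero.mp (hker _ h0)
    refine ⟨hinj, ?_⟩
    exact (LinearMap.injective_iff_surjective (f := (S : W →ₗ[ℂ] W))).mp hinj
end
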